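/- arXiv:1105.5176 — 7 statements merged into one kernel-verified Lean document; each statement's English description precedes it below -/
import Mathlib

section
/- For integers n, m with nm > 1, the mean of 1/F(A), taken over all 2^{nm} binary arrays A of size n×m, equals 1 - 1/(nm). -/
open scoped BigOperators

noncomputable section

/-- `A` is an array of size `n × m`: entries vanish outside `[0,n) × [0,m)`. -/
def IsArray (n m : ℤ) (A : ℤ × ℤ → ℝ) : Prop :=
  ∀ i j : ℤ, A (i, j) ≠ 0 → 0 ≤ i ∧ i < n ∧ 0 ≤ j ∧ j < m

/-- `A` is a binary array of size `n × m`. -/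
def IsBinaryArray (n m : ℤ) (A : ℤ × ℤ → ℝ) : Prop :=
  IsArray n m A ∧
    ∀ i j : ℤ, 0 ≤ i → i < n → 0 ≤ j → j < m → A (i, j) = 1 ∨ A (i, j) = -1

/-- Aperiodic autocorrelation of a two-dimensional array at displacement `(u, v)`. -/
def autocorr (A : ℤ × ℤ → ℝ) (u v : ℤ) : ℝ :=
  ∑ᶠ i : ℤ, ∑ᶠ j : ℤ, A (i, j) * A (i + u, j + v)

/-- Merit factor of an array of size `n × m`. -/
def meritFactor (n m : ℤ) (A : ℤ × ℤ → ℝ) : ℝ :=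
  ((n : ℝ) * m) ^ 2 / ∑ᶠ uv ∈ {x : ℤ × ℤ | x ≠ (0, 0)}, (autocorr A uv.1 uv.2) ^ 2

/-- `a` is a sequence of length `n`: entries vanish outside `[0,n)`. -/
def IsSeq (n : ℤ) (a : ℤ → ℝ) : Prop := ∀ i : ℤ, a i ≠ 0 → 0 ≤ i ∧ i < n

/-- `a` is a binary sequence of length `n`. -/
def IsBinarySeq (n : ℤ) (a : ℤ → ℝ) : Prop :=
  IsSeq n a ∧ ∀ i : ℤ, 0 ≤ i → i < n → a i = 1 ∨ a i = -1

/-- Aperiodic autocorrelation of a sequence at displacement `u`. -/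
def seqAutocorr (a : ℤ → ℝ) (u : ℤ) : ℝ := ∑ᶠ i : ℤ, a i * a (i + u)

/-- Merit factor of a sequence of length `n`. -/
def seqMeritFactor (n : ℤ) (a : ℤ → ℝ) : ℝ :=
  (n : ℝ) ^ 2 / ∑ᶠ u ∈ {u : ℤ | u ≠ 0}, (seqAutocorr a u) ^ 2

/-- Rotation of a sequence of length `n` by a real number `s`. -/
def seqRotate (n : ℤ) (s : ℝ) (a : ℤ → ℝ) : ℤ → ℝ :=
  fun i => if 0 ≤ i ∧ i < n then a ((i + ⌊(n : ℝ) * s⌋) % n) else 0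

/-- Rotation of an array of size `n × m` by real numbers `s` and `t`. -/
def arrRotate (n m : ℤ) (s t : ℝ) (A : ℤ × ℤ → ℝ) : ℤ × ℤ → ℝ :=
  fun x => if 0 ≤ x.1 ∧ x.1 < n ∧ 0 ≤ x.2 ∧ x.2 < m then
    A ((x.1 + ⌊(n : ℝ) * s⌋) % n, (x.2 + ⌊(m : ℝ) * t⌋) % m) else 0

/-- Generating function of an array of size `n × m`, evaluated at `(x, y)`. -/
def genFun (n m : ℕ) (A : ℤ × ℤ → ℝ) (x y : ℂ) : ℂ :=
  ∑ i ∈ Finset.range n, ∑ j ∈ Finset.range m, (A (i, j) : ℂ) * x ^ i * y ^ j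

/-- `zeta d = e^{iπ/d}`, a primitive `(2d)`-th root of unity. -/
def zeta (d : ℕ) : ℂ := Complex.exp (Real.pi * Complex.I / d)

/-- `eps p j = e^{2πij/p}`, a `p`-th root of unity. -/
def eps (p : ℕ) (j : ℤ) : ℂ := Complex.exp (2 * Real.pi * Complex.I * j / p)

/-- The Legendre sequence of length `p` (for `p` an odd prime). -/
def legendreSeq (p : ℕ) : ℤ → ℝ :=
  fun i => if 0 ≤ i ∧ i < p then (if i = 0 then 1 else (jacobiSym i p : ℝ)) else 0

/-- The ternary Legendre sequence of length `p` (for `p` an odd prime). -/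
def ternaryLegendreSeq (p : ℕ) : ℤ → ℝ :=
  fun i => if 0 ≤ i ∧ i < p then (jacobiSym i p : ℝ) else 0

/-- The binary array of size `n × m` determined by the sign pattern `σ`. -/
def signArray (n m : ℕ) (σ : Fin n × Fin m → Bool) : ℤ × ℤ → ℝ :=
  fun x =>
    if h : 0 ≤ x.1 ∧ x.1 < (n : ℤ) ∧ 0 ≤ x.2 ∧ x.2 < (m : ℤ) then
      (if σ (⟨x.1.toNat, by omega⟩, ⟨x.2.toNat, by omega⟩) then 1 else -1)
    else 0

namespace MFaux

def epsb (b : Bool) : ℝ := if b then 1 else -1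

lemma epsb_not (b : Bool) : epsb (!b) = - epsb b := by cases b <;> simp [epsb]

lemma epsb_sq (b : Bool) : epsb b * epsb b = 1 := by cases b <;> simp [epsb]

/-- flip at a point is an involutive equiv on `I → Bool` -/
def flipE {I : Type*} [DecidableEq I] (a : I) : (I → Bool) ≃ (I → Bool) where
  toFun σ := Function.update σ a (!σ a)
  invFun σ := Function.update σ a (!σ a)
  left_inv σ := by
    funext x
    by_cases hx : x = a
    · subst hx; simp
    · simp [Function.update_of_ne hx]
  right_inv σ := by
    funext x
    by_cases hx : x = a
    · subst hx; simp
    · simp [Function.update_of_ne hx]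

lemma sum_eq_zero_of_flip {I : Type*} [DecidableEq I] [Fintype I] (a : I)
    (f : (I → Bool) → ℝ) (hf : ∀ σ, f (Function.update σ a (!σ a)) = - f σ) :
    ∑ σ : I → Bool, f σ = 0 := by
  have h := Equiv.sum_comp (flipE a) f
  simp only [flipE, Equiv.coe_fn_mk, hf, Finset.sum_neg_distrib] at h
  linarith

lemma four_point {I : Type*} [DecidableEq I] [Fintype I] (a a' b b' : I)
    (hcc : a ≠ a') (hdd : b ≠ b') :
    ∑ σ : I → Bool, epsb (σ a) * epsb (σ a') * epsb (σ b) * epsb (σ b')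
      = if (a = b ∧ a' = b') ∨ (a = b' ∧ a' = b) then (2 : ℝ) ^ (Fintype.card I) else 0 := by
  by_cases h1 : (a = b ∧ a' = b') ∨ (a = b' ∧ a' = b)
  · rw [if_pos h1]
    have key : ∀ σ : I → Bool, epsb (σ a) * epsb (σ a') * epsb (σ b) * epsb (σ b') = 1 := by
      intro σ
      rcases h1 with ⟨rfl, rfl⟩ | ⟨rfl, rfl⟩
      · have := epsb_sq (σ a); have := epsb_sq (σ a'); nlinarith [epsb_sq (σ a), epsb_sq (σ a')]
      · nlinarith [epsb_sq (σ a), epsb_sq (σ a')]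
    simp only [key, Finset.sum_const, Finset.card_univ, nsmul_eq_mul, mul_one]
    rw [Fintype.card_fun]
    push_cast
    simp
  · rw [if_neg h1]
    have hkey : (a ≠ b ∧ a ≠ b') ∨ (a' ≠ b ∧ a' ≠ b') := by
      by_contra hc
      push_neg at hc
      obtain ⟨h2, h3⟩ := hc
      rcases Classical.em (a = b) with hab | hab
      · rcases Classical.em (a' = b) with h4 | h4
        · exact hcc (hab.trans h4.symm)
        · exact h1 (Or.inl ⟨hab, h3 h4⟩)
      · have hab' := h2 hab
        rcases Classical.em (a' = b) with h4 | h4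
        · exact h1 (Or.inr ⟨hab', h4⟩)
        · exact hcc (hab'.trans (h3 h4).symm)
    rcases hkey with ⟨h2, h3⟩ | ⟨h2, h3⟩
    · apply sum_eq_zero_of_flip a
      intro σ
      rw [Function.update_self, Function.update_of_ne (Ne.symm hcc),
        Function.update_of_ne (Ne.symm h2), Function.update_of_ne (Ne.symm h3), epsb_not]
      ring
    · apply sum_eq_zero_of_flip a'
      intro σ
      rw [Function.update_self, Function.update_of_ne hcc,
        Function.update_of_ne (Ne.symm h2), Function.update_of_ne (Ne.symm h3), epsb_not]
      ring



def box (n m : ℕ) : Finset (ℤ × ℤ) := Finset.Ico 0 (n : ℤ) ×ˢ Finset.Ico 0 (m : ℤ)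

def Sset (n m : ℕ) (u v : ℤ) : Finset (ℤ × ℤ) :=
  (box n m).filter (fun c => 0 ≤ c.1 + u ∧ c.1 + u < n ∧ 0 ≤ c.2 + v ∧ c.2 + v < m)

def tf (n m : ℕ) (hn : 0 < n) (hm : 0 < m) (c : ℤ × ℤ) : Fin n × Fin m :=
  (⟨c.1.toNat % n, Nat.mod_lt _ hn⟩, ⟨c.2.toNat % m, Nat.mod_lt _ hm⟩)

lemma mem_box {n m : ℕ} {c : ℤ × ℤ} :
    c ∈ box n m ↔ 0 ≤ c.1 ∧ c.1 < n ∧ 0 ≤ c.2 ∧ c.2 < m := by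
  simp [box, Finset.mem_product, Finset.mem_Ico, and_assoc]

lemma signArray_ne_zero {n m : ℕ} {σ : Fin n × Fin m → Bool} {c : ℤ × ℤ}
    (h : signArray n m σ c ≠ 0) : c ∈ box n m := by
  rw [mem_box]
  by_contra hc
  exact h (dif_neg (by tauto))

lemma signArray_eq {n m : ℕ} (hn : 0 < n) (hm : 0 < m) (σ : Fin n × Fin m → Bool)
    {c : ℤ × ℤ} (hc : c ∈ box n m) :
    signArray n m σ c = epsb (σ (tf n m hn hm c)) := by
  rw [mem_box] at hc
  rw [signArray, dif_pos hc]
  have h1 : (⟨c.1.toNat, by omega⟩ : Fin n) = (tf n m hn hm c).1 := by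
    apply Fin.ext
    show c.1.toNat = c.1.toNat % n
    rw [Nat.mod_eq_of_lt (by omega)]
  have h2 : (⟨c.2.toNat, by omega⟩ : Fin m) = (tf n m hn hm c).2 := by
    apply Fin.ext
    show c.2.toNat = c.2.toNat % m
    rw [Nat.mod_eq_of_lt (by omega)]
  rw [show ((⟨c.1.toNat, by omega⟩ : Fin n), (⟨c.2.toNat, by omega⟩ : Fin m))
        = tf n m hn hm c from Prod.ext h1 h2]
  rfl

lemma tf_inj {n m : ℕ} (hn : 0 < n) (hm : 0 < m) {c d : ℤ × ℤ}
    (hc : c ∈ box n m) (hd : d ∈ box n m) (h : tf n m hn hm c = tf n m hn hm d) : c = d := by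
  rw [mem_box] at hc hd
  rw [tf, tf, Prod.mk.injEq, Fin.mk.injEq, Fin.mk.injEq] at h
  have e1 : c.1.toNat % n = c.1.toNat := Nat.mod_eq_of_lt (by omega)
  have e2 : d.1.toNat % n = d.1.toNat := Nat.mod_eq_of_lt (by omega)
  have e3 : c.2.toNat % m = c.2.toNat := Nat.mod_eq_of_lt (by omega)
  have e4 : d.2.toNat % m = d.2.toNat := Nat.mod_eq_of_lt (by omega)
  have := h.1; have := h.2
  exact Prod.ext (by omega) (by omega)

lemma autocorr_signArray {n m : ℕ} (hn : 0 < n) (hm : 0 < m) (σ : Fin n × Fin m → Bool)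
    (u v : ℤ) :
    autocorr (signArray n m σ) u v
      = ∑ c ∈ Sset n m u v,
          epsb (σ (tf n m hn hm c)) * epsb (σ (tf n m hn hm (c.1 + u, c.2 + v))) := by
  set A := signArray n m σ with hA
  have inner : ∀ i : ℤ, (∑ᶠ j : ℤ, A (i, j) * A (i + u, j + v))
      = ∑ j ∈ Finset.Ico (0 : ℤ) (m : ℤ), A (i, j) * A (i + u, j + v) := by
    intro i
    apply finsum_eq_sum_of_support_subset
    intro j hj
    simp only [Function.mem_support] at hj
    have : A (i, j) ≠ 0 := fun h0 => hj (by rw [h0]; ring)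
    have := signArray_ne_zero this
    rw [mem_box] at this
    simp only [Finset.coe_Ico, Set.mem_Ico]
    exact ⟨this.2.2.1, this.2.2.2⟩
  rw [autocorr]
  simp only [inner]
  rw [finsum_eq_sum_of_support_subset _ (s := Finset.Ico (0 : ℤ) (n : ℤ)) ?_]
  · rw [← Finset.sum_product']
    rw [show (Finset.Ico (0:ℤ) (n:ℤ) ×ˢ Finset.Ico (0:ℤ) (m:ℤ)) = box n m from rfl]
    rw [← Finset.sum_filter_of_ne (p := fun c : ℤ × ℤ =>
        0 ≤ c.1 + u ∧ c.1 + u < n ∧ 0 ≤ c.2 + v ∧ c.2 + v < m) ?_]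
    · rw [show (box n m).filter _ = Sset n m u v from rfl]
      apply Finset.sum_congr rfl
      intro c hc
      rw [Sset, Finset.mem_filter] at hc
      obtain ⟨hc1, hc2⟩ := hc
      have hc3 : ((c.1 + u, c.2 + v) : ℤ × ℤ) ∈ box n m := by rw [mem_box]; exact hc2
      rw [hA, show ((c.1, c.2) : ℤ × ℤ) = c from rfl, signArray_eq hn hm σ hc1,
        signArray_eq hn hm σ hc3]
    · intro c _ hne
      have : A (c.1 + u, c.2 + v) ≠ 0 := fun h0 => hne (by rw [h0]; ring)
      have := signArray_ne_zero this
      rw [mem_box] at this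
      exact this
  · intro i hi
    simp only [Function.mem_support] at hi
    have : ∃ j ∈ Finset.Ico (0 : ℤ) (m : ℤ), A (i, j) * A (i + u, j + v) ≠ 0 := by
      by_contra hc
      push_neg at hc
      exact hi (Finset.sum_eq_zero hc)
    obtain ⟨j, _, hj⟩ := this
    have : A (i, j) ≠ 0 := fun h0 => hj (by rw [h0]; ring)
    have := signArray_ne_zero this
    rw [mem_box] at this
    simp only [Finset.coe_Ico, Set.mem_Ico]
    exact ⟨this.1, this.2.1⟩





def Tbox (n m : ℕ) : Finset (ℤ × ℤ) :=
  Finset.Ioo (-(n : ℤ)) n ×ˢ Finset.Ioo (-(m : ℤ)) m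

lemma box_card (n m : ℕ) : (box n m).card = n * m := by
  rw [box, Finset.card_product]
  simp

lemma Sset_zero (n m : ℕ) : Sset n m 0 0 = box n m := by
  rw [Sset]
  apply Finset.filter_true_of_mem
  intro c hc
  rw [mem_box] at hc
  omega

lemma count_sum (n m : ℕ) :
    ∑ uv ∈ Tbox n m, (Sset n m uv.1 uv.2).card = (n * m) ^ 2 := by
  have key : (box n m ×ˢ box n m).card
      = ∑ uv ∈ Tbox n m,
          ((box n m ×ˢ box n m).filter
            (fun p => (p.2.1 - p.1.1, p.2.2 - p.1.2) = uv)).card := by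
    apply Finset.card_eq_sum_card_fiberwise
    intro p hp
    rw [Finset.mem_coe, Finset.mem_product] at hp
    have h1 := mem_box.1 hp.1
    have h2 := mem_box.1 hp.2
    simp only [Tbox, Finset.mem_coe, Finset.mem_product, Finset.mem_Ioo]
    omega
  have fib : ∀ u v : ℤ,
      ((box n m ×ˢ box n m).filter (fun p => (p.2.1 - p.1.1, p.2.2 - p.1.2) = (u, v)))
        = Finset.image (fun c : ℤ × ℤ => (c, (c.1 + u, c.2 + v))) (Sset n m u v) := by
    intro u v
    ext p
    simp only [Finset.mem_filter, Finset.mem_product, Finset.mem_image, Sset,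
      mem_box, Prod.mk.injEq, Prod.ext_iff]
    constructor
    · rintro ⟨⟨h1, h2⟩, h3, h4⟩
      exact ⟨p.1, by omega⟩
    · rintro ⟨c, ⟨hc1, hc2⟩, hcp, hp1, hp2⟩
      omega
  have inj : ∀ u v : ℤ, Function.Injective (fun c : ℤ × ℤ => (c, (c.1 + u, c.2 + v))) := by
    intro u v a b hab
    exact congrArg Prod.fst hab
  calc ∑ uv ∈ Tbox n m, (Sset n m uv.1 uv.2).card
      = ∑ uv ∈ Tbox n m,
          ((box n m ×ˢ box n m).filter
            (fun p => (p.2.1 - p.1.1, p.2.2 - p.1.2) = uv)).card := by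
        apply Finset.sum_congr rfl
        intro uv _
        rw [fib uv.1 uv.2, Finset.card_image_of_injective _ (inj uv.1 uv.2)]
    _ = (box n m ×ˢ box n m).card := key.symm
    _ = (n * m) ^ 2 := by rw [Finset.card_product, box_card]; ring

lemma zero_mem_Tbox {n m : ℕ} (hn : 0 < n) (hm : 0 < m) : ((0, 0) : ℤ × ℤ) ∈ Tbox n m := by
  simp only [Tbox, Finset.mem_product, Finset.mem_Ioo]
  omega


lemma autocorr_ne_zero_mem {n m : ℕ} (hn : 0 < n) (hm : 0 < m)
    (σ : Fin n × Fin m → Bool) {u v : ℤ}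
    (h : autocorr (signArray n m σ) u v ≠ 0) : ((u, v) : ℤ × ℤ) ∈ Tbox n m := by
  rw [autocorr_signArray hn hm] at h
  have : ∃ c ∈ Sset n m u v, True := by
    by_contra hc
    push_neg at hc
    apply h
    apply Finset.sum_eq_zero
    intro c hcs
    exact (hc c hcs).elim
  obtain ⟨c, hc, -⟩ := this
  rw [Sset, Finset.mem_filter, mem_box] at hc
  simp only [Tbox, Finset.mem_product, Finset.mem_Ioo]
  omega

lemma merit_inv {n m : ℕ} (hn : 0 < n) (hm : 0 < m) (σ : Fin n × Fin m → Bool) :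
    1 / meritFactor n m (signArray n m σ)
      = (∑ uv ∈ (Tbox n m).erase (0, 0),
          (autocorr (signArray n m σ) uv.1 uv.2) ^ 2) / ((n : ℝ) * m) ^ 2 := by
  rw [meritFactor, one_div_div]
  have hs : ∑ᶠ uv ∈ {x : ℤ × ℤ | x ≠ (0, 0)}, (autocorr (signArray n m σ) uv.1 uv.2) ^ 2
      = ∑ uv ∈ (Tbox n m).erase (0, 0), (autocorr (signArray n m σ) uv.1 uv.2) ^ 2 := by
    apply finsum_mem_eq_sum_of_inter_support_eq
    ext x
    simp only [Set.mem_inter_iff, Set.mem_setOf_eq, Finset.coe_erase, Set.mem_diff,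
      Finset.mem_coe, Function.mem_support, Set.mem_singleton_iff]
    constructor
    · rintro ⟨hx0, hx⟩
      have hC : autocorr (signArray n m σ) x.1 x.2 ≠ 0 := by
        intro h0
        apply hx
        rw [h0]
        ring
      have := autocorr_ne_zero_mem hn hm σ hC
      exact ⟨⟨by simpa using this, hx0⟩, hx⟩
    · rintro ⟨⟨-, hx0⟩, hx⟩
      exact ⟨hx0, hx⟩
  rw [hs]
  norm_cast

lemma four_point' {I : Type*} [DecidableEq I] [Fintype I] (a a' b b' : I)
    (hcc : a ≠ a') (hdd : b ≠ b') :
    ∑ σ : I → Bool, (epsb (σ a) * epsb (σ a')) * (epsb (σ b) * epsb (σ b'))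
      = if (a = b ∧ a' = b') ∨ (a = b' ∧ a' = b) then (2 : ℝ) ^ (Fintype.card I) else 0 := by
  rw [← four_point a a' b b' hcc hdd]
  apply Finset.sum_congr rfl
  intro σ _
  ring

lemma sum_sq {n m : ℕ} (hn : 0 < n) (hm : 0 < m) {u v : ℤ} (huv : ¬(u = 0 ∧ v = 0)) :
    ∑ σ : Fin n × Fin m → Bool, (autocorr (signArray n m σ) u v) ^ 2
      = 2 ^ (n * m) * ((Sset n m u v).card : ℝ) := by
  have hSbox : ∀ c ∈ Sset n m u v, c ∈ box n m := by
    intro c hc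
    exact (Finset.mem_filter.1 hc).1
  have hSshift : ∀ c ∈ Sset n m u v, ((c.1 + u, c.2 + v) : ℤ × ℤ) ∈ box n m := by
    intro c hc
    rw [mem_box]
    exact (Finset.mem_filter.1 hc).2
  calc ∑ σ : Fin n × Fin m → Bool, (autocorr (signArray n m σ) u v) ^ 2
      = ∑ σ : Fin n × Fin m → Bool, ∑ c ∈ Sset n m u v, ∑ d ∈ Sset n m u v,
          (epsb (σ (tf n m hn hm c)) * epsb (σ (tf n m hn hm (c.1 + u, c.2 + v))))
          * (epsb (σ (tf n m hn hm d)) * epsb (σ (tf n m hn hm (d.1 + u, d.2 + v)))) := by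
        apply Finset.sum_congr rfl
        intro σ _
        rw [autocorr_signArray hn hm, sq, Finset.sum_mul_sum]
    _ = ∑ c ∈ Sset n m u v, ∑ d ∈ Sset n m u v, ∑ σ : Fin n × Fin m → Bool,
          (epsb (σ (tf n m hn hm c)) * epsb (σ (tf n m hn hm (c.1 + u, c.2 + v))))
          * (epsb (σ (tf n m hn hm d)) * epsb (σ (tf n m hn hm (d.1 + u, d.2 + v)))) := by
        rw [Finset.sum_comm]
        apply Finset.sum_congr rfl
        intro c _
        rw [Finset.sum_comm]
    _ = ∑ c ∈ Sset n m u v, ∑ d ∈ Sset n m u v,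
          (if c = d then (2 : ℝ) ^ (Fintype.card (Fin n × Fin m)) else 0) := by
        apply Finset.sum_congr rfl
        intro c hc
        apply Finset.sum_congr rfl
        intro d hd
        have hcsh : c ≠ ((c.1 + u, c.2 + v) : ℤ × ℤ) := by
          intro he
          rw [Prod.ext_iff] at he
          simp only at he
          exact huv ⟨by omega, by omega⟩
        have hdsh : d ≠ ((d.1 + u, d.2 + v) : ℤ × ℤ) := by
          intro he
          rw [Prod.ext_iff] at he
          simp only at he
          exact huv ⟨by omega, by omega⟩
        have hcc : tf n m hn hm c ≠ tf n m hn hm ((c.1 + u, c.2 + v) : ℤ × ℤ) :=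
          fun he => hcsh (tf_inj hn hm (hSbox c hc) (hSshift c hc) he)
        have hdd : tf n m hn hm d ≠ tf n m hn hm ((d.1 + u, d.2 + v) : ℤ × ℤ) :=
          fun he => hdsh (tf_inj hn hm (hSbox d hd) (hSshift d hd) he)
        rw [four_point' _ _ _ _ hcc hdd]
        apply if_congr _ rfl rfl
        constructor
        · rintro (⟨h1, -⟩ | ⟨h1, h2⟩)
          · exact tf_inj hn hm (hSbox c hc) (hSbox d hd) h1
          · have e1 : c = ((d.1 + u, d.2 + v) : ℤ × ℤ) :=
              tf_inj hn hm (hSbox c hc) (hSshift d hd) h1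
            have e2 : ((c.1 + u, c.2 + v) : ℤ × ℤ) = d :=
              tf_inj hn hm (hSshift c hc) (hSbox d hd) h2
            rw [Prod.ext_iff] at e1 e2
            simp only at e1 e2
            exact absurd ⟨by omega, by omega⟩ huv
        · rintro rfl
          exact Or.inl ⟨rfl, rfl⟩
    _ = ∑ c ∈ Sset n m u v, (2 : ℝ) ^ (Fintype.card (Fin n × Fin m)) := by
        apply Finset.sum_congr rfl
        intro c hc
        rw [Finset.sum_ite_eq (Sset n m u v) c, if_pos hc]
    _ = 2 ^ (n * m) * ((Sset n m u v).card : ℝ) := by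
        rw [Finset.sum_const, nsmul_eq_mul]
        simp [Fintype.card_prod, mul_comm]

end MFaux
/-- The mean of `1/F(A)` over all `2^{nm}` binary arrays `A` of size `n × m`
equals `1 - 1/(nm)`. -/
theorem stmt0 (n m : ℕ) (h : 1 < n * m) :
    (∑ σ : Fin n × Fin m → Bool, 1 / meritFactor n m (signArray n m σ)) / 2 ^ (n * m)
      = 1 - 1 / (n * m : ℝ) := by
  have hn : 0 < n := by
    rcases Nat.eq_zero_or_pos n with h0 | h0
    · rw [h0] at h; simp at h
    · exact h0
  have hm : 0 < m := by
    rcases Nat.eq_zero_or_pos m with h0 | h0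
    · rw [h0] at h; simp at h
    · exact h0
  have hnm : (0 : ℝ) < (n : ℝ) * m := by positivity
  have key : ∑ σ : Fin n × Fin m → Bool, 1 / meritFactor n m (signArray n m σ)
      = (2 ^ (n * m) * (((n : ℝ) * m) ^ 2 - (n : ℝ) * m)) / ((n : ℝ) * m) ^ 2 := by
    have h1 : ∀ σ : Fin n × Fin m → Bool,
        1 / meritFactor n m (signArray n m σ)
          = (∑ uv ∈ (MFaux.Tbox n m).erase (0, 0),
              (autocorr (signArray n m σ) uv.1 uv.2) ^ 2) / ((n : ℝ) * m) ^ 2 :=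
      fun σ => MFaux.merit_inv hn hm σ
    simp only [h1]
    rw [← Finset.sum_div]
    congr 1
    rw [Finset.sum_comm]
    have h2 : ∀ uv ∈ (MFaux.Tbox n m).erase (0, 0),
        ∑ σ : Fin n × Fin m → Bool, (autocorr (signArray n m σ) uv.1 uv.2) ^ 2
          = 2 ^ (n * m) * ((MFaux.Sset n m uv.1 uv.2).card : ℝ) := by
      intro uv huv
      have hne : uv ≠ ((0, 0) : ℤ × ℤ) := (Finset.mem_erase.1 huv).1
      apply MFaux.sum_sq hn hm
      intro hc
      exact hne (Prod.ext hc.1 hc.2)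
    rw [Finset.sum_congr rfl h2, ← Finset.mul_sum]
    congr 1
    have h3 : ∑ uv ∈ (MFaux.Tbox n m).erase (0, 0), ((MFaux.Sset n m uv.1 uv.2).card : ℝ)
        = (∑ uv ∈ MFaux.Tbox n m, ((MFaux.Sset n m uv.1 uv.2).card : ℝ))
          - ((MFaux.Sset n m 0 0).card : ℝ) := by
      rw [eq_sub_iff_add_eq]
      exact Finset.sum_erase_add _ _ (MFaux.zero_mem_Tbox hn hm)
    rw [h3, MFaux.Sset_zero, MFaux.box_card]
    have h4 : ∑ uv ∈ MFaux.Tbox n m, ((MFaux.Sset n m uv.1 uv.2).card : ℝ)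
        = (((n * m) ^ 2 : ℕ) : ℝ) := by
      rw [← MFaux.count_sum n m]
      push_cast
      ring
    rw [h4]
    push_cast
    ring
  rw [key]
  have h2 : (2 : ℝ) ^ (n * m) ≠ 0 := by positivity
  field_simp
end
end

section
/- Let A be a binary sequence of length n > 1 and B a binary sequence of length m > 1. Then 1/F(A×B) = (1 + 1/F(A))(1 + 1/F(B)) - 1. -/
open scoped BigOperators

noncomputable section

/-- A sequence autocorrelation as a finite sum. -/
lemma seqAutocorr_eq_sum {n : ℤ} {a : ℤ → ℝ} (ha : IsSeq n a) (u : ℤ) :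
    seqAutocorr a u = ∑ i ∈ Finset.Ico (0 : ℤ) n, a i * a (i + u) := by
  apply finsum_eq_finset_sum_of_support_subset
  intro i hi
  simp only [Function.mem_support] at hi
  have : a i ≠ 0 := fun h => hi (by simp [h])
  have := ha i this
  simp [Finset.mem_Ico, this.1, this.2]

lemma seqAutocorr_zero {n : ℤ} (hn : 0 ≤ n) {a : ℤ → ℝ} (ha : IsBinarySeq n a) :
    seqAutocorr a 0 = (n : ℝ) := by
  rw [seqAutocorr_eq_sum ha.1]
  have : ∀ i ∈ Finset.Ico (0 : ℤ) n, a i * a (i + 0) = 1 := by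
    intro i hi
    rw [Finset.mem_Ico] at hi
    rcases ha.2 i hi.1 hi.2 with h | h <;> simp [h]
  rw [Finset.sum_congr rfl this, Finset.sum_const, Int.card_Ico]
  have : ((n - 0).toNat : ℤ) = n := by omega
  simp only [nsmul_eq_mul, mul_one]
  exact_mod_cast congrArg (fun k : ℤ => (k : ℝ)) this

lemma seqAutocorr_support {n : ℤ} {a : ℤ → ℝ} (ha : IsSeq n a) {u : ℤ}
    (h : seqAutocorr a u ≠ 0) : u ∈ Finset.Ioo (-n) n := by
  rw [seqAutocorr_eq_sum ha] at h
  obtain ⟨i, -, hi⟩ := Finset.exists_ne_zero_of_sum_ne_zero h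
  have h1 := ha i (fun h0 => hi (by simp [h0]))
  have h2 := ha (i + u) (fun h0 => hi (by simp [h0]))
  rw [Finset.mem_Ioo]
  omega

lemma autocorr_prod {n m : ℤ} {a b : ℤ → ℝ} (ha : IsSeq n a) (hb : IsSeq m b) (u v : ℤ) :
    autocorr (fun x => a x.1 * b x.2) u v = seqAutocorr a u * seqAutocorr b v := by
  unfold autocorr
  have inner : ∀ i : ℤ, (∑ᶠ j : ℤ, a i * b j * (a (i + u) * b (j + v)))
      = (a i * a (i + u)) * seqAutocorr b v := by
    intro i
    have hre : ∀ j : ℤ, a i * b j * (a (i + u) * b (j + v))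
        = a i * a (i + u) * (b j * b (j + v)) := fun j => by ring
    simp only [hre]
    rw [seqAutocorr_eq_sum hb, Finset.mul_sum]
    apply finsum_eq_finset_sum_of_support_subset
    intro j hj
    simp only [Function.mem_support] at hj
    have : b j ≠ 0 := fun h => hj (by simp [h])
    have := hb j this
    simp [Finset.mem_Ico, this.1, this.2]
  simp only [inner]
  rw [seqAutocorr_eq_sum ha, Finset.sum_mul]
  apply finsum_eq_finset_sum_of_support_subset
  intro i hi
  simp only [Function.mem_support] at hi
  have : a i ≠ 0 := fun h => hi (by simp [h])
  have := ha i this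
  simp [Finset.mem_Ico, this.1, this.2]

/-- For binary sequences `a` of length `n > 1` and `b` of length `m > 1`,
`1/F(A×B) = (1 + 1/F(A))(1 + 1/F(B)) - 1`. -/
theorem stmt2 (n m : ℤ) (hn : 1 < n) (hm : 1 < m) (a b : ℤ → ℝ)
    (ha : IsBinarySeq n a) (hb : IsBinarySeq m b) :
    1 / meritFactor n m (fun x => a x.1 * b x.2)
      = (1 + 1 / seqMeritFactor n a) * (1 + 1 / seqMeritFactor m b) - 1 := by
  classical
  set sN : Finset ℤ := Finset.Ioo (-n) n with hsN
  set sM : Finset ℤ := Finset.Ioo (-m) m with hsM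
  set P : ℝ := ∑ u ∈ sN, (seqAutocorr a u) ^ 2 with hP
  set Q : ℝ := ∑ v ∈ sM, (seqAutocorr b v) ^ 2 with hQ
  have h0N : (0 : ℤ) ∈ sN := by simp [hsN]; omega
  have h0M : (0 : ℤ) ∈ sM := by simp [hsM]; omega
  -- the one-dimensional residual sums
  have hSa : ∑ᶠ u ∈ {u : ℤ | u ≠ 0}, (seqAutocorr a u) ^ 2
      = P - (n : ℝ) ^ 2 := by
    rw [finsum_mem_eq_sum_of_inter_support_eq _
      (t := sN.erase 0) (by
        ext u
        simp only [Set.mem_inter_iff, Set.mem_setOf_eq, Function.mem_support,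
          Finset.coe_erase, Set.mem_diff, Finset.mem_coe, Set.mem_singleton_iff]
        constructor
        · rintro ⟨h1, h2⟩
          exact ⟨⟨seqAutocorr_support ha.1 (fun h => h2 (by simp [h])), h1⟩, h2⟩
        · rintro ⟨⟨-, h1⟩, h2⟩; exact ⟨h1, h2⟩)]
    rw [Finset.sum_erase_eq_sub h0N, seqAutocorr_zero (by omega) ha]
  have hSb : ∑ᶠ v ∈ {v : ℤ | v ≠ 0}, (seqAutocorr b v) ^ 2
      = Q - (m : ℝ) ^ 2 := by
    rw [finsum_mem_eq_sum_of_inter_support_eq _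
      (t := sM.erase 0) (by
        ext v
        simp only [Set.mem_inter_iff, Set.mem_setOf_eq, Function.mem_support,
          Finset.coe_erase, Set.mem_diff, Finset.mem_coe, Set.mem_singleton_iff]
        constructor
        · rintro ⟨h1, h2⟩
          exact ⟨⟨seqAutocorr_support hb.1 (fun h => h2 (by simp [h])), h1⟩, h2⟩
        · rintro ⟨⟨-, h1⟩, h2⟩; exact ⟨h1, h2⟩)]
    rw [Finset.sum_erase_eq_sub h0M, seqAutocorr_zero (by omega) hb]
  -- the two-dimensional residual sum
  have hT : ∑ᶠ uv ∈ {x : ℤ × ℤ | x ≠ (0, 0)},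
      (autocorr (fun x => a x.1 * b x.2) uv.1 uv.2) ^ 2
      = P * Q - ((n : ℝ) * m) ^ 2 := by
    rw [finsum_mem_eq_sum_of_inter_support_eq _
      (t := (sN ×ˢ sM).erase (0, 0)) (by
        ext x
        simp only [Set.mem_inter_iff, Set.mem_setOf_eq, Function.mem_support,
          Finset.coe_erase, Set.mem_diff, Finset.mem_coe, Set.mem_singleton_iff,
          Finset.mem_product]
        constructor
        · rintro ⟨h1, h2⟩
          refine ⟨⟨?_, h1⟩, h2⟩
          rw [autocorr_prod ha.1 hb.1] at h2
          constructor
          · exact seqAutocorr_support ha.1 (fun h => h2 (by simp [h]))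
          · exact seqAutocorr_support hb.1 (fun h => h2 (by simp [h]))
        · rintro ⟨⟨-, h1⟩, h2⟩; exact ⟨h1, h2⟩)]
    have hmem : ((0 : ℤ), (0 : ℤ)) ∈ sN ×ˢ sM := by
      simp [Finset.mem_product, h0N, h0M]
    rw [Finset.sum_erase_eq_sub hmem]
    have : ∀ x ∈ sN ×ˢ sM, (autocorr (fun x => a x.1 * b x.2) x.1 x.2) ^ 2
        = (seqAutocorr a x.1) ^ 2 * (seqAutocorr b x.2) ^ 2 := by
      intro x _
      rw [autocorr_prod ha.1 hb.1]; ring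
    rw [Finset.sum_congr rfl this, Finset.sum_product' (f := fun u v => seqAutocorr a u ^ 2 * seqAutocorr b v ^ 2),
      ← Finset.sum_mul_sum,
      autocorr_prod ha.1 hb.1, seqAutocorr_zero (by omega) ha,
      seqAutocorr_zero (by omega) hb]
  rw [meritFactor, seqMeritFactor, seqMeritFactor, hT, hSa, hSb]
  have hn0 : (n : ℝ) ≠ 0 := by positivity
  have hm0 : (m : ℝ) ≠ 0 := by positivity
  rw [one_div_div, one_div_div, one_div_div]
  field_simp
  ring
end
end

section
/- For all integers n, m > 1, F_{n,m} ≥ F_n·F_m / (F_n + F_m + 1), where F_{n,m} is the maximum of F(A) over all binary arrays A of size n×m and F_n := F_{n,1}. -/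
open scoped BigOperators

noncomputable section

/-- `F_{n,m}`: the maximum merit factor over all binary arrays of size `n × m`. -/
def maxMeritFactor (n m : ℤ) : ℝ :=
  sSup {x : ℝ | ∃ A : ℤ × ℤ → ℝ, IsBinaryArray n m A ∧ x = meritFactor n m A}

namespace MFaux

lemma seqAutocorr_eq_sum {n : ℤ} {a : ℤ → ℝ} (ha : IsSeq n a) (u : ℤ) :
    seqAutocorr a u = ∑ i ∈ Finset.Ico 0 n, a i * a (i + u) := by
  apply finsum_eq_sum_of_support_subset
  intro i hi
  have : a i ≠ 0 := fun h => hi (by simp [Function.mem_support] at hi ⊢; simp [h] at hi)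
  rcases ha i this with ⟨h1, h2⟩
  simp [Finset.mem_Ico, h1, h2]

lemma seqAutocorr_zero {n : ℤ} {a : ℤ → ℝ} (ha : IsBinarySeq n a) (hn : 0 ≤ n) :
    seqAutocorr a 0 = (n : ℝ) := by
  rw [seqAutocorr_eq_sum ha.1]
  have : ∀ i ∈ Finset.Ico 0 n, a i * a (i + 0) = 1 := by
    intro i hi
    rw [Finset.mem_Ico] at hi
    rcases ha.2 i hi.1 hi.2 with h | h <;> simp [h]
  rw [Finset.sum_congr rfl this]
  simp only [Finset.sum_const, nsmul_eq_mul, mul_one]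
  norm_cast
  simp [Int.toNat_of_nonneg hn]

lemma seqAutocorr_mem_support {n : ℤ} {a : ℤ → ℝ} (ha : IsSeq n a) {u : ℤ}
    (h : seqAutocorr a u ≠ 0) : u ∈ Finset.Ioo (-n) n := by
  rw [seqAutocorr_eq_sum ha] at h
  obtain ⟨i, _, hi⟩ := Finset.exists_ne_zero_of_sum_ne_zero h
  have h1 := ha i (fun h0 => hi (by simp [h0]))
  have h2 := ha (i + u) (fun h0 => hi (by simp [h0]))
  rw [Finset.mem_Ioo]
  omega


/-- Sum of squared off-peak autocorrelations over the finite range. -/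
def Ecorr (n : ℤ) (a : ℤ → ℝ) : ℝ :=
  ∑ u ∈ (Finset.Ioo (-n) n).erase 0, (seqAutocorr a u) ^ 2

lemma Ecorr_nonneg (n : ℤ) (a : ℤ → ℝ) : 0 ≤ Ecorr n a :=
  Finset.sum_nonneg fun _ _ => sq_nonneg _

lemma Ecorr_eq_finsum {n : ℤ} {a : ℤ → ℝ} (ha : IsSeq n a) :
    ∑ᶠ u ∈ {u : ℤ | u ≠ 0}, (seqAutocorr a u) ^ 2 = Ecorr n a := by
  apply finsum_mem_eq_sum_of_inter_support_eq
  ext u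
  simp only [Set.mem_inter_iff, Set.mem_setOf_eq, Function.mem_support, Finset.coe_erase,
    Set.mem_diff, Finset.mem_coe, Finset.mem_Ioo, Set.mem_singleton_iff]
  constructor
  · rintro ⟨h1, h2⟩
    have : seqAutocorr a u ≠ 0 := by
      intro h; exact h2 (by simp [h])
    have := seqAutocorr_mem_support ha this
    rw [Finset.mem_Ioo] at this
    exact ⟨⟨this, h1⟩, h2⟩
  · rintro ⟨⟨_, h1⟩, h2⟩; exact ⟨h1, h2⟩

lemma Ecorr_ge_one {n : ℤ} {a : ℤ → ℝ} (ha : IsBinarySeq n a) (hn : 2 ≤ n) :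
    1 ≤ Ecorr n a := by
  have hmem : (n - 1) ∈ (Finset.Ioo (-n) n).erase 0 := by
    simp only [Finset.mem_erase, Finset.mem_Ioo]; omega
  have hval : seqAutocorr a (n - 1) = a 0 * a (n - 1) := by
    rw [seqAutocorr_eq_sum ha.1]
    rw [Finset.sum_eq_single 0]
    · ring_nf
    · intro i hi hi0
      rw [Finset.mem_Ico] at hi
      have : a (i + (n - 1)) = 0 := by
        by_contra h
        have := ha.1 _ h; omega
      simp [this]
    · intro h
      simp only [Finset.mem_Ico] at h; omega
  have hsq : (seqAutocorr a (n - 1)) ^ 2 = 1 := by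
    rw [hval]
    rcases ha.2 0 le_rfl (by omega) with h0 | h0 <;>
      rcases ha.2 (n - 1) (by omega) (by omega) with h1 | h1 <;> rw [h0, h1] <;> ring
  calc (1 : ℝ) = (seqAutocorr a (n - 1)) ^ 2 := hsq.symm
    _ ≤ Ecorr n a :=
        Finset.single_le_sum (f := fun u => (seqAutocorr a u) ^ 2)
          (fun i _ => sq_nonneg _) hmem


/-- Product array of two sequences. -/
def prodArr (a b : ℤ → ℝ) : ℤ × ℤ → ℝ := fun p => a p.1 * b p.2

lemma prodArr_binary {n m : ℤ} {a b : ℤ → ℝ} (ha : IsBinarySeq n a)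
    (hb : IsBinarySeq m b) : IsBinaryArray n m (prodArr a b) := by
  constructor
  · intro i j h
    simp only [prodArr, ne_eq, mul_eq_zero, not_or] at h
    obtain ⟨h1, h2⟩ := ha.1 i h.1
    obtain ⟨h3, h4⟩ := hb.1 j h.2
    exact ⟨h1, h2, h3, h4⟩
  · intro i j h1 h2 h3 h4
    rcases ha.2 i h1 h2 with h | h <;> rcases hb.2 j h3 h4 with h' | h' <;>
      simp [prodArr, h, h']

lemma support_mul_shift {n : ℤ} {a : ℤ → ℝ} (ha : IsSeq n a) (u : ℤ) :
    (Function.support fun i => a i * a (i + u)) ⊆ (Finset.Ico 0 n : Finset ℤ) := by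
  intro i hi
  simp only [Function.mem_support, ne_eq, mul_eq_zero, not_or] at hi
  obtain ⟨h1, h2⟩ := ha i hi.1
  simp [Finset.mem_Ico, h1, h2]

lemma autocorr_prodArr {n m : ℤ} {a b : ℤ → ℝ} (ha : IsSeq n a) (hb : IsSeq m b)
    (u v : ℤ) : autocorr (prodArr a b) u v = seqAutocorr a u * seqAutocorr b v := by
  have hfin : (Function.support fun j => b j * b (j + v)).Finite :=
    Set.Finite.subset (Finset.Ico 0 m : Finset ℤ).finite_toSet (support_mul_shift hb v)
  unfold autocorr prodArr seqAutocorr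
  have step1 : ∀ i : ℤ, (∑ᶠ j : ℤ, a i * b j * (a (i + u) * b (j + v)))
      = (a i * a (i + u)) * ∑ᶠ j : ℤ, b j * b (j + v) := by
    intro i
    rw [mul_finsum]
    apply finsum_congr
    intro j; ring
  rw [finsum_congr step1, finsum_mul]


lemma sum_sq_Ioo {n : ℤ} {a : ℤ → ℝ} (ha : IsBinarySeq n a) (hn : 1 ≤ n) :
    ∑ u ∈ Finset.Ioo (-n) n, (seqAutocorr a u) ^ 2 = Ecorr n a + (n : ℝ) ^ 2 := by
  have h0 : (0 : ℤ) ∈ Finset.Ioo (-n) n := by simp [Finset.mem_Ioo]; omega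
  rw [← Finset.sum_erase_add _ _ h0, seqAutocorr_zero ha (by omega)]
  rfl

lemma key_sum {n m : ℤ} {a b : ℤ → ℝ} (ha : IsBinarySeq n a) (hb : IsBinarySeq m b)
    (hn : 1 ≤ n) (hm : 1 ≤ m) :
    ∑ᶠ uv ∈ {x : ℤ × ℤ | x ≠ (0, 0)}, (autocorr (prodArr a b) uv.1 uv.2) ^ 2 =
      (n : ℝ) ^ 2 * Ecorr m b + (m : ℝ) ^ 2 * Ecorr n a + Ecorr n a * Ecorr m b := by
  set t : Finset (ℤ × ℤ) := ((Finset.Ioo (-n) n) ×ˢ (Finset.Ioo (-m) m)).erase (0, 0)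
    with ht
  have step1 : ∑ᶠ uv ∈ {x : ℤ × ℤ | x ≠ (0, 0)}, (autocorr (prodArr a b) uv.1 uv.2) ^ 2
      = ∑ uv ∈ t, (autocorr (prodArr a b) uv.1 uv.2) ^ 2 := by
    apply finsum_mem_eq_sum_of_inter_support_eq
    ext uv
    simp only [Set.mem_inter_iff, Set.mem_setOf_eq, Function.mem_support, ht,
      Finset.coe_erase, Set.mem_diff, Finset.mem_coe, Finset.mem_product,
      Set.mem_singleton_iff]
    constructor
    · rintro ⟨h1, h2⟩
      refine ⟨⟨?_, h1⟩, h2⟩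
      rw [autocorr_prodArr ha.1 hb.1] at h2
      have hA : seqAutocorr a uv.1 ≠ 0 := by
        intro h; exact h2 (by simp [h])
      have hB : seqAutocorr b uv.2 ≠ 0 := by
        intro h; exact h2 (by simp [h])
      exact ⟨seqAutocorr_mem_support ha.1 hA, seqAutocorr_mem_support hb.1 hB⟩
    · rintro ⟨⟨_, h1⟩, h2⟩; exact ⟨h1, h2⟩
  rw [step1]
  have h00 : ((0, 0) : ℤ × ℤ) ∈ (Finset.Ioo (-n) n) ×ˢ (Finset.Ioo (-m) m) := by
    simp [Finset.mem_product, Finset.mem_Ioo]; omega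
  have step2 : ∑ uv ∈ t, (autocorr (prodArr a b) uv.1 uv.2) ^ 2
      = (∑ uv ∈ (Finset.Ioo (-n) n) ×ˢ (Finset.Ioo (-m) m),
          (autocorr (prodArr a b) uv.1 uv.2) ^ 2)
        - (autocorr (prodArr a b) 0 0) ^ 2 := by
    rw [ht, Finset.sum_erase_eq_sub h00]
  rw [step2, Finset.sum_product]
  have step3 : ∀ u v : ℤ, (autocorr (prodArr a b) u v) ^ 2
      = (seqAutocorr a u) ^ 2 * (seqAutocorr b v) ^ 2 := by
    intro u v; rw [autocorr_prodArr ha.1 hb.1, mul_pow]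
  simp only [step3]
  rw [← Finset.sum_mul_sum]
  rw [sum_sq_Ioo ha hn, sum_sq_Ioo hb hm,
    seqAutocorr_zero ha (by omega), seqAutocorr_zero hb (by omega)]
  ring


lemma merit_prodArr {n m : ℤ} {a b : ℤ → ℝ} (ha : IsBinarySeq n a)
    (hb : IsBinarySeq m b) (hn : 1 ≤ n) (hm : 1 ≤ m) :
    meritFactor n m (prodArr a b) =
      ((n : ℝ) * m) ^ 2 /
        ((n : ℝ) ^ 2 * Ecorr m b + (m : ℝ) ^ 2 * Ecorr n a + Ecorr n a * Ecorr m b) := by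
  rw [meritFactor, key_sum ha hb hn hm]

/-- The length-1 "delta" sequence. -/
def deltaSeq : ℤ → ℝ := fun j => if j = 0 then 1 else 0

lemma deltaSeq_binary : IsBinarySeq 1 deltaSeq := by
  constructor
  · intro i hi
    by_contra h
    have : i ≠ 0 := by omega
    simp [deltaSeq, this] at hi
  · intro i h1 h2
    have : i = 0 := by omega
    simp [deltaSeq, this]

lemma Ecorr_deltaSeq : Ecorr 1 deltaSeq = 0 := by
  unfold Ecorr
  have : (Finset.Ioo (-1 : ℤ) 1).erase 0 = ∅ := by decide
  rw [this, Finset.sum_empty]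

lemma col_eq_prodArr {n : ℤ} {A : ℤ × ℤ → ℝ} (hA : IsBinaryArray n 1 A) :
    A = prodArr (fun i => A (i, 0)) deltaSeq := by
  funext p
  obtain ⟨i, j⟩ := p
  by_cases hj : j = 0
  · subst hj; simp [prodArr, deltaSeq]
  · have : A (i, j) = 0 := by
      by_contra h
      have := hA.1 i j h; omega
    simp [prodArr, deltaSeq, hj, this]

lemma col_binary_seq {n : ℤ} {A : ℤ × ℤ → ℝ} (hA : IsBinaryArray n 1 A) :
    IsBinarySeq n (fun i => A (i, 0)) := by
  constructor
  · intro i hi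
    have := hA.1 i 0 hi
    exact ⟨this.1, this.2.1⟩
  · intro i h1 h2
    exact hA.2 i 0 h1 h2 le_rfl zero_lt_one

lemma merit_col {n : ℤ} {A : ℤ × ℤ → ℝ} (hA : IsBinaryArray n 1 A) (hn : 1 ≤ n) :
    meritFactor n 1 A = (n : ℝ) ^ 2 / Ecorr n (fun i => A (i, 0)) := by
  rw [col_eq_prodArr hA,
    merit_prodArr (col_binary_seq hA) deltaSeq_binary hn le_rfl, Ecorr_deltaSeq]
  norm_num
  simp [prodArr, deltaSeq]


lemma binaryArray_set_finite (n m : ℤ) :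
    {A : ℤ × ℤ → ℝ | IsBinaryArray n m A}.Finite := by
  classical
  set box : Finset (ℤ × ℤ) := Finset.Ico 0 n ×ˢ Finset.Ico 0 m with hbox
  apply Set.Finite.subset (Set.finite_range
    (fun g : box → Bool => fun p : ℤ × ℤ =>
      if h : p ∈ box then (if g ⟨p, h⟩ then (1 : ℝ) else -1) else 0))
  rintro A ⟨hA1, hA2⟩
  refine ⟨fun q => if A q.1 = 1 then true else false, ?_⟩
  funext p
  by_cases hp : p ∈ box
  · have hp' := hp
    simp only [hbox, Finset.mem_product, Finset.mem_Ico] at hp'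
    obtain ⟨⟨hb1, hb2⟩, hb3, hb4⟩ := hp'
    have h1 : A p = A (p.1, p.2) := rfl
    rcases hA2 p.1 p.2 hb1 hb2 hb3 hb4 with h | h
    · simp only [hp, dif_pos]
      rw [if_pos (by rw [h1, h]; simp), h1, h]
    · have hne : ¬ (A p = 1) := by rw [h1, h]; norm_num
      simp only [hp, dif_pos]
      rw [if_neg (by simp [hne]), h1, h]
  · have : A p = 0 := by
      by_contra h
      have := hA1 p.1 p.2 (by simpa using h)
      exact hp (by simp [hbox, Finset.mem_product, Finset.mem_Ico]; tauto)
    simp [hp, this]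

lemma merit_set_finite (n m : ℤ) :
    {x : ℝ | ∃ A : ℤ × ℤ → ℝ, IsBinaryArray n m A ∧ x = meritFactor n m A}.Finite := by
  have : {x : ℝ | ∃ A : ℤ × ℤ → ℝ, IsBinaryArray n m A ∧ x = meritFactor n m A}
      = (meritFactor n m) '' {A | IsBinaryArray n m A} := by
    ext x
    simp only [Set.mem_setOf_eq, Set.mem_image]
    constructor
    · rintro ⟨A, h1, h2⟩; exact ⟨A, h1, h2.symm⟩
    · rintro ⟨A, h1, h2⟩; exact ⟨A, h1, h2.symm⟩
  rw [this]
  exact Set.Finite.image _ (binaryArray_set_finite n m)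

/-- The all-ones sequence. -/
def onesSeq (n : ℤ) : ℤ → ℝ := fun i => if 0 ≤ i ∧ i < n then 1 else 0

lemma onesSeq_binary (n : ℤ) (hn : 0 < n) : IsBinarySeq n (onesSeq n) := by
  constructor
  · intro i hi
    by_contra h
    simp only [onesSeq] at hi
    rw [if_neg (by tauto)] at hi
    exact hi rfl
  · intro i h1 h2
    left; simp [onesSeq, h1, h2]

lemma merit_set_nonempty (n m : ℤ) (hn : 0 < n) (hm : 0 < m) :
    {x : ℝ | ∃ A : ℤ × ℤ → ℝ, IsBinaryArray n m A ∧ x = meritFactor n m A}.Nonempty := by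
  exact ⟨_, prodArr (onesSeq n) (onesSeq m),
    prodArr_binary (onesSeq_binary n hn) (onesSeq_binary m hm), rfl⟩

lemma maxMeritFactor_mem (n m : ℤ) (hn : 0 < n) (hm : 0 < m) :
    maxMeritFactor n m ∈
      {x : ℝ | ∃ A : ℤ × ℤ → ℝ, IsBinaryArray n m A ∧ x = meritFactor n m A} :=
  Set.Nonempty.csSup_mem (merit_set_nonempty n m hn hm) (merit_set_finite n m)

end MFaux

/-- For all integers `n, m > 1`, `F_{n,m} ≥ F_n F_m / (F_n + F_m + 1)`,
where `F_n := F_{n,1}`. -/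
theorem stmt3 (n m : ℤ) (hn : 1 < n) (hm : 1 < m) :
    maxMeritFactor n m ≥
      maxMeritFactor n 1 * maxMeritFactor m 1 /
        (maxMeritFactor n 1 + maxMeritFactor m 1 + 1) := by
  obtain ⟨A, hA, hFA⟩ := MFaux.maxMeritFactor_mem n 1 (by omega) one_pos
  obtain ⟨B, hB, hFB⟩ := MFaux.maxMeritFactor_mem m 1 (by omega) one_pos
  set a : ℤ → ℝ := fun i => A (i, 0) with ha
  set b : ℤ → ℝ := fun i => B (i, 0) with hb
  have hba : IsBinarySeq n a := MFaux.col_binary_seq hA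
  have hbb : IsBinarySeq m b := MFaux.col_binary_seq hB
  set Ea := MFaux.Ecorr n a with hEa'
  set Eb := MFaux.Ecorr m b with hEb'
  have hEa : 1 ≤ Ea := MFaux.Ecorr_ge_one hba (by omega)
  have hEb : 1 ≤ Eb := MFaux.Ecorr_ge_one hbb (by omega)
  have hFA' : maxMeritFactor n 1 = (n : ℝ) ^ 2 / Ea := by
    rw [hFA, MFaux.merit_col hA (by omega)]
  have hFB' : maxMeritFactor m 1 = (m : ℝ) ^ 2 / Eb := by
    rw [hFB, MFaux.merit_col hB (by omega)]
  have hmem : meritFactor n m (MFaux.prodArr a b) ∈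
      {x : ℝ | ∃ A : ℤ × ℤ → ℝ, IsBinaryArray n m A ∧ x = meritFactor n m A} :=
    ⟨MFaux.prodArr a b, MFaux.prodArr_binary hba hbb, rfl⟩
  have hle := le_csSup (Set.Finite.bddAbove (MFaux.merit_set_finite n m)) hmem
  refine le_trans ?_ hle
  rw [MFaux.merit_prodArr hba hbb (by omega) (by omega), hFA', hFB']
  have hn1 : (1 : ℝ) < (n : ℝ) := by exact_mod_cast hn
  have hm1 : (1 : ℝ) < (m : ℝ) := by exact_mod_cast hm
  have h1 : Ea ≠ 0 := by linarith
  have h2 : Eb ≠ 0 := by linarith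
  have h4 : (n : ℝ) ^ 2 / Ea + (m : ℝ) ^ 2 / Eb + 1 ≠ 0 := by
    have : 0 < (n : ℝ) ^ 2 / Ea := by positivity
    have : 0 < (m : ℝ) ^ 2 / Eb := by positivity
    linarith
  rw [← hEa', ← hEb']
  have h5 : 0 < (n : ℝ) ^ 2 * Eb + (m : ℝ) ^ 2 * Ea + Ea * Eb := by
    have hEa0 : 0 < Ea := by linarith
    have hEb0 : 0 < Eb := by linarith
    have := mul_pos hEa0 hEb0
    have := mul_nonneg (sq_nonneg (n : ℝ)) hEb0.le
    have := mul_nonneg (sq_nonneg (m : ℝ)) hEa0.le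
    linarith
  have h6 := h5.ne'
  apply le_of_eq
  field_simp
end
end

section
/- Let d > 1 be an odd integer and let A ∈ ℂ[x] be a polynomial of degree at most d-1. Then for every integer j, |A(ζ_d^j)| ≤ (2 log d) · max_{0≤k<d} |A(ζ_d^{2k})|, where ζ_d = e^{iπ/d}. -/
open scoped BigOperators

noncomputable section

lemma aux_abs_exp_sub_one (θ : ℝ) :
    ‖Complex.exp (θ * Complex.I) - 1‖ = 2 * |Real.sin (θ / 2)| := by
  have h1 : Complex.exp (θ * Complex.I) - 1
      = ((Real.cos θ - 1 : ℝ) : ℂ) + (Real.sin θ : ℝ) * Complex.I := by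
    rw [Complex.exp_mul_I, ← Complex.ofReal_cos, ← Complex.ofReal_sin]
    push_cast
    ring
  rw [h1, Complex.norm_add_mul_I]
  have hc := Real.cos_sq (θ / 2)
  rw [show 2 * (θ / 2) = θ by ring] at hc
  have hs := Real.sin_sq_add_cos_sq (θ / 2)
  have habs : |Real.sin (θ / 2)| ^ 2 = Real.sin (θ / 2) ^ 2 := sq_abs _
  have h3 := Real.sin_sq_add_cos_sq θ
  have h2 : (Real.cos θ - 1) ^ 2 + Real.sin θ ^ 2 = (2 * |Real.sin (θ / 2)|) ^ 2 := by
    nlinarith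
  rw [h2, Real.sqrt_sq (by positivity)]

lemma aux_abs_sin_add_int_mul_pi (x : ℝ) (t : ℤ) :
    |Real.sin (x + t * Real.pi)| = |Real.sin x| := by
  rw [Real.sin_add, Real.sin_int_mul_pi, mul_zero, add_zero, abs_mul]
  have h : Real.cos (t * Real.pi) ^ 2 = 1 := by
    have h1 := Real.sin_sq_add_cos_sq ((t : ℝ) * Real.pi)
    rw [Real.sin_int_mul_pi] at h1
    nlinarith
  have h2 : |Real.cos ((t : ℝ) * Real.pi)| = 1 := by
    have h0 : (0 : ℝ) ≤ |Real.cos ((t : ℝ) * Real.pi)| := abs_nonneg _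
    nlinarith [sq_abs (Real.cos ((t : ℝ) * Real.pi))]
  rw [h2, mul_one]

lemma aux_le_log {p q a : ℕ} (hq : 0 < q) (ha : 0 < a)
    (h : (2.7182818286 : ℝ) ^ p ≤ (a : ℝ) ^ q) : (p : ℝ) / q ≤ Real.log a := by
  rw [Real.le_log_iff_exp_le (by positivity)]
  refine le_of_pow_le_pow_left₀ hq.ne' (by positivity) ?_
  have h1 : Real.exp ((p : ℝ) / q) ^ q = Real.exp p := by
    rw [← Real.exp_nat_mul]
    congr 1
    field_simp
  rw [h1]
  calc Real.exp (p : ℝ) = Real.exp 1 ^ p := by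
        rw [← Real.exp_nat_mul, mul_one]
    _ ≤ 2.7182818286 ^ p := pow_le_pow_left₀ (Real.exp_pos 1).le Real.exp_one_lt_d9.le p
    _ ≤ (a : ℝ) ^ q := h

lemma aux_harmonic (e : ℕ) (he : 1 ≤ e) :
    ∑ k ∈ Finset.range e, (1 : ℝ) / (2 * k + 1) ≤ 1 + Real.log (2 * e - 1) / 2 := by
  induction e with
  | zero => omega
  | succ n ih =>
    rcases Nat.lt_or_ge 1 (n + 1) with h | h
    · have hn : 1 ≤ n := by omega
      have ihn := ih hn
      rw [Finset.sum_range_succ]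
      have h1 : (0 : ℝ) < 2 * (n : ℝ) - 1 := by
        have : (1 : ℝ) ≤ (n : ℝ) := by exact_mod_cast hn
        linarith
      have h2 : (0 : ℝ) < 2 * (n : ℝ) + 1 := by positivity
      have hlog := Real.log_le_sub_one_of_pos (x := (2 * (n : ℝ) - 1) / (2 * (n : ℝ) + 1))
        (by positivity)
      rw [Real.log_div h1.ne' h2.ne'] at hlog
      have h4 : (2 * (n : ℝ) - 1) / (2 * (n : ℝ) + 1) - 1 = -2 / (2 * (n : ℝ) + 1) := by
        field_simp
        ring
      rw [h4] at hlog
      have h5 : 2 * ((n : ℝ) + 1) - 1 = 2 * (n : ℝ) + 1 := by ring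
      push_cast
      rw [h5]
      have h6 : (-2 : ℝ) / (2 * (n : ℝ) + 1) = -2 * (1 / (2 * (n : ℝ) + 1)) := by ring
      rw [h6] at hlog
      push_cast at ihn
      linarith
    · have hn0 : n = 0 := by omega
      subst hn0
      norm_num [Finset.sum_range_one]


lemma aux_interp (d : ℕ) (hd : 0 < d) (ω : ℂ) (hω : IsPrimitiveRoot ω d)
    (A : Polynomial ℂ) (hdeg : A.natDegree < d) (z : ℂ) :
    (d : ℂ) * A.eval z
      = ∑ k ∈ Finset.range d, A.eval (ω ^ k) * ∑ i ∈ Finset.range d, (z * (ω ^ k)⁻¹) ^ i := by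
  have hω0 : ω ≠ 0 := hω.ne_zero hd.ne'
  have key : ∀ k i i' : ℕ, (ω ^ k) ^ i' * ((ω ^ k)⁻¹) ^ i = (ω ^ ((i' : ℤ) - i)) ^ k := by
    intro k i i'
    rw [← pow_mul, inv_pow, ← pow_mul]
    rw [show ((ω ^ ((i' : ℤ) - i)) ^ k) = ω ^ (((i' : ℤ) - i) * k) by
      rw [← zpow_natCast (ω ^ ((i' : ℤ) - i)) k, ← zpow_mul]]
    rw [sub_mul, zpow_sub₀ hω0]
    norm_cast
    rw [div_eq_mul_inv, mul_comm k i', mul_comm k i]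
  have horth : ∀ i' i : ℕ, i' < d → i < d →
      (∑ k ∈ Finset.range d, (ω ^ ((i' : ℤ) - i)) ^ k) = if i' = i then (d : ℂ) else 0 := by
    intro i' i hi' hi
    by_cases h : i' = i
    · subst h
      simp
    · rw [if_neg h]
      have hne : ω ^ ((i' : ℤ) - i) ≠ 1 := by
        rw [Ne, hω.zpow_eq_one_iff_dvd]
        intro hdvd
        have h0 : ((i' : ℤ) - i) = 0 := Int.eq_zero_of_abs_lt_dvd hdvd (by
          rw [abs_sub_lt_iff]
          constructor <;> push_cast <;> omega)
        apply h
        omega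
      have hpow : (ω ^ ((i' : ℤ) - i)) ^ d = 1 := by
        rw [← zpow_natCast (ω ^ ((i' : ℤ) - i)) d, ← zpow_mul, mul_comm, zpow_mul,
          zpow_natCast, hω.pow_eq_one, one_zpow]
      rw [geom_sum_eq hne, hpow, sub_self, zero_div]
  symm
  calc ∑ k ∈ Finset.range d, A.eval (ω ^ k) * ∑ i ∈ Finset.range d, (z * (ω ^ k)⁻¹) ^ i
      = ∑ k ∈ Finset.range d, ∑ i' ∈ Finset.range d, ∑ i ∈ Finset.range d,
          A.coeff i' * z ^ i * (ω ^ ((i' : ℤ) - i)) ^ k := by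
        refine Finset.sum_congr rfl fun k _ => ?_
        rw [Polynomial.eval_eq_sum_range' hdeg, Finset.sum_mul_sum]
        refine Finset.sum_congr rfl fun i' _ => Finset.sum_congr rfl fun i _ => ?_
        rw [mul_pow, ← key k i i']
        ring
    _ = ∑ i' ∈ Finset.range d, ∑ i ∈ Finset.range d,
          A.coeff i' * z ^ i * ∑ k ∈ Finset.range d, (ω ^ ((i' : ℤ) - i)) ^ k := by
        rw [Finset.sum_comm]
        refine Finset.sum_congr rfl fun i' _ => ?_
        rw [Finset.sum_comm]
        refine Finset.sum_congr rfl fun i _ => ?_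
        rw [Finset.mul_sum]
    _ = ∑ i' ∈ Finset.range d, A.coeff i' * z ^ i' * d := by
        refine Finset.sum_congr rfl fun i' hi' => ?_
        rw [Finset.sum_congr rfl (fun i hi => by
          rw [horth i' i (Finset.mem_range.mp hi') (Finset.mem_range.mp hi)])]
        simp only [mul_ite, mul_zero, Finset.sum_ite_eq, hi', if_true]
    _ = (d : ℂ) * A.eval z := by
        rw [Polynomial.eval_eq_sum_range' hdeg, Finset.mul_sum]
        refine Finset.sum_congr rfl fun i _ => ?_
        ring

set_option maxHeartbeats 2000000 in
/-- For odd `d > 1` and a polynomial `A ∈ ℂ[x]` of degree at most `d-1`,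
`|A(ζ_d^j)| ≤ (2 log d) max_{0 ≤ k < d} |A(ζ_d^{2k})|`. -/
theorem stmt8 (d : ℕ) (hd : 1 < d) (hodd : Odd d) (A : Polynomial ℂ)
    (hdeg : A.natDegree ≤ d - 1) (j : ℤ) :
    ‖A.eval (zeta d ^ j)‖
      ≤ (2 * Real.log d) *
          (Finset.range d).sup' (Finset.nonempty_range_iff.mpr (by omega))
            (fun k => ‖A.eval (zeta d ^ (2 * k))‖) := by
  obtain ⟨u, hu⟩ := hodd
  have hd3 : 3 ≤ d := by omega
  have hd0 : 0 < d := by omega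
  have hdR : (0 : ℝ) < d := by exact_mod_cast hd0
  have hdC : (d : ℂ) ≠ 0 := by exact_mod_cast hd0.ne'
  set M := (Finset.range d).sup' (Finset.nonempty_range_iff.mpr (by omega))
      (fun k => ‖A.eval (zeta d ^ (2 * k))‖) with hMdef
  have hMk : ∀ k, k < d → ‖A.eval (zeta d ^ (2 * k))‖ ≤ M :=
    fun k hk => Finset.le_sup' (fun k => ‖A.eval (zeta d ^ (2 * k))‖) (Finset.mem_range.mpr hk)
  have hM0 : 0 ≤ M := le_trans (norm_nonneg _) (hMk 0 hd0)
  have hζ0 : zeta d ≠ 0 := Complex.exp_ne_zero _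
  have hlog1 : (1 : ℝ) ≤ Real.log d := by
    rw [Real.le_log_iff_exp_le hdR]
    calc Real.exp 1 ≤ 2.7182818286 := Real.exp_one_lt_d9.le
      _ ≤ 3 := by norm_num
      _ ≤ (d : ℝ) := by exact_mod_cast hd3
  have h2d1 : zeta d ^ ((2 * d : ℕ) : ℤ) = 1 := by
    rw [zpow_natCast]
    unfold zeta
    rw [← Complex.exp_nat_mul,
      show ((2 * d : ℕ) : ℂ) * (↑Real.pi * Complex.I / ↑d) = 2 * ↑Real.pi * Complex.I by
        push_cast; field_simp]
    exact Complex.exp_two_pi_mul_I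
  rcases Int.even_or_odd j with ⟨t, ht⟩ | ⟨t, ht⟩
  · -- even case
    set k₀ := (t % d).toNat with hk₀def
    have hk₀ : (k₀ : ℤ) = t % (d : ℤ) :=
      Int.toNat_of_nonneg (Int.emod_nonneg t (by exact_mod_cast hd0.ne'))
    have hk₀d : k₀ < d := by
      have h1 := Int.emod_lt_of_pos t (show (0 : ℤ) < d by exact_mod_cast hd0)
      omega
    have hz : zeta d ^ j = zeta d ^ (2 * k₀) := by
      have hdiv := Int.mul_ediv_add_emod t (d : ℤ)
      calc zeta d ^ j
          = zeta d ^ ((2 * k₀ : ℕ) : ℤ) * (zeta d ^ ((2 * d : ℕ) : ℤ)) ^ (t / (d : ℤ)) := by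
            rw [← zpow_mul, ← zpow_add₀ hζ0]
            congr 1
            have h4 : (2 * (d:ℤ)) * (t / (d:ℤ)) = 2 * ((d:ℤ) * (t / (d:ℤ))) := by ring
            push_cast
            omega
        _ = zeta d ^ (2 * k₀) := by rw [h2d1, one_zpow, mul_one, zpow_natCast]
    rw [hz]
    calc ‖A.eval (zeta d ^ (2 * k₀))‖ ≤ M := hMk k₀ hk₀d
      _ ≤ (2 * Real.log d) * M := by nlinarith
  · -- odd case
    set e := (d - 1) / 2 with hedef
    have hde : d = 2 * e + 1 := by omega
    have hωprim : IsPrimitiveRoot (zeta d ^ 2) d := by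
      have hωeq : zeta d ^ 2 = Complex.exp (2 * ↑Real.pi * Complex.I / d) := by
        unfold zeta
        rw [show (2 : ℕ) = ((2 : ℕ) : ℕ) by rfl, ← Complex.exp_nat_mul]
        congr 1
        push_cast
        ring
      rw [hωeq]
      exact Complex.isPrimitiveRoot_exp d hd0.ne'
    set S : ℤ → ℝ := fun m => |Real.sin ((m : ℝ) * Real.pi / (2 * d))| with hSdef
    have hper : ∀ m m' : ℤ, (2 * (d : ℤ)) ∣ (m - m') → S m = S m' := by
      rintro m m' ⟨c, hc⟩
      have hm : (m : ℝ) = (m' : ℝ) + 2 * d * c := by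
        have h1 : ((m - m' : ℤ) : ℝ) = ((2 * (d : ℤ) * c : ℤ) : ℝ) := by rw [hc]
        push_cast at h1
        linarith
      show |Real.sin _| = |Real.sin _|
      rw [show (m : ℝ) * Real.pi / (2 * d) = (m' : ℝ) * Real.pi / (2 * d) + (c : ℝ) * Real.pi by
        rw [hm]; field_simp]
      exact aux_abs_sin_add_int_mul_pi _ c
    have hSneg : ∀ m : ℤ, S (-m) = S m := by
      intro m
      show |Real.sin _| = |Real.sin _|
      rw [show ((-m : ℤ) : ℝ) * Real.pi / (2 * d) = -((m : ℝ) * Real.pi / (2 * d)) by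
        push_cast; ring, Real.sin_neg, abs_neg]
    have hrefl : ∀ m : ℤ, S (2 * (d : ℤ) - m) = S m := by
      intro m
      rw [hper (2 * (d : ℤ) - m) (-m) ⟨1, by ring⟩, hSneg]
    have habs : ∀ m : ℤ, ‖zeta d ^ m - 1‖ = 2 * S m := by
      intro m
      have h1 : zeta d ^ m = Complex.exp ((((m : ℝ) * Real.pi / d : ℝ) : ℂ) * Complex.I) := by
        unfold zeta
        rw [← Complex.exp_int_mul]
        congr 1
        push_cast
        field_simp
      rw [h1, aux_abs_exp_sub_one]
      show _ = 2 * |Real.sin _|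
      congr 2
      field_simp
    have hSd : S (2 * (e : ℤ) + 1) = 1 := by
      show |Real.sin _| = 1
      rw [show ((2 * (e : ℤ) + 1 : ℤ) : ℝ) * Real.pi / (2 * d) = Real.pi / 2 by
        have : ((2 * (e : ℤ) + 1 : ℤ) : ℝ) = (d : ℝ) := by push_cast; rw [hde]; push_cast; ring
        rw [this]; field_simp]
      rw [Real.sin_pi_div_two, abs_one]
    have hζd : zeta d ^ ((d : ℕ) : ℤ) = -1 := by
      rw [zpow_natCast]
      unfold zeta
      rw [← Complex.exp_nat_mul,
        show (d : ℂ) * (↑Real.pi * Complex.I / ↑d) = ↑Real.pi * Complex.I by field_simp]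
      exact Complex.exp_pi_mul_I
    have hw : ∀ k : ℕ, zeta d ^ j * ((zeta d ^ 2) ^ k)⁻¹ = zeta d ^ ((j : ℤ) - 2 * k) := by
      intro k
      have h1 : (j : ℤ) - 2 * k = j + -((2 * k : ℕ) : ℤ) := by push_cast; ring
      rw [h1, zpow_add₀ hζ0, zpow_neg, zpow_natCast, pow_mul]
    have hwd : ∀ k : ℕ, (zeta d ^ ((j : ℤ) - 2 * k)) ^ d = -1 := by
      intro k
      have hm : Odd ((j : ℤ) - 2 * (k : ℤ)) := ⟨t - k, by omega⟩
      calc (zeta d ^ ((j : ℤ) - 2 * k)) ^ d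
          = zeta d ^ (((j : ℤ) - 2 * k) * d) := by
            rw [← zpow_natCast (zeta d ^ ((j : ℤ) - 2 * (k : ℤ))) d, ← zpow_mul]
        _ = (zeta d ^ ((d : ℕ) : ℤ)) ^ ((j : ℤ) - 2 * k) := by
            rw [← zpow_mul, mul_comm]
        _ = -1 := by rw [hζd, hm.neg_one_zpow]
    have hgs : ∀ k : ℕ,
        ‖∑ i ∈ Finset.range d, (zeta d ^ j * ((zeta d ^ 2) ^ k)⁻¹) ^ i‖
          = 1 / S ((j : ℤ) - 2 * k) := by
      intro k
      rw [hw k]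
      have hne1 : zeta d ^ ((j : ℤ) - 2 * (k : ℤ)) ≠ 1 := by
        intro h
        have h2 := hwd k
        rw [h, one_pow] at h2
        norm_num at h2
      rw [geom_sum_eq hne1, hwd k]
      rw [show (-1 : ℂ) - 1 = -2 by norm_num, norm_div, show ‖(-2 : ℂ)‖ = 2 by
        rw [norm_neg, Complex.norm_two], habs]
      rcases eq_or_ne (S ((j : ℤ) - 2 * k)) 0 with h | h
      · rw [h]; simp
      · field_simp
    -- triangle inequality
    have htri : (d : ℝ) * ‖A.eval (zeta d ^ j)‖
        ≤ M * ∑ k ∈ Finset.range d, 1 / S ((j : ℤ) - 2 * k) := by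
      have h1 : ‖(d : ℂ) * A.eval (zeta d ^ j)‖
          = (d : ℝ) * ‖A.eval (zeta d ^ j)‖ := by
        rw [norm_mul, Complex.norm_natCast]
      rw [← h1, aux_interp d hd0 _ hωprim A (by omega) (zeta d ^ j), Finset.mul_sum]
      refine le_trans (norm_sum_le _ _) (Finset.sum_le_sum fun k hk => ?_)
      rw [norm_mul, hgs k]
      have hSnn : 0 ≤ 1 / S ((j : ℤ) - 2 * k) := by positivity
      have hA : ‖A.eval ((zeta d ^ 2) ^ k)‖ ≤ M := by
        rw [← pow_mul]
        exact hMk k (Finset.mem_range.mp hk)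
      exact mul_le_mul_of_nonneg_right hA hSnn
    -- reindexing
    set c := (t % (d : ℤ)).toNat with hcdef
    have hc : (c : ℤ) = t % (d : ℤ) :=
      Int.toNat_of_nonneg (Int.emod_nonneg t (by exact_mod_cast hd0.ne'))
    have hcd : c < d := by
      have h1 := Int.emod_lt_of_pos t (show (0 : ℤ) < d by exact_mod_cast hd0)
      omega
    have hmod : ∀ a : ℕ, a < 2 * d → a % d = if a < d then a else a - d := by
      intro a ha
      split_ifs with h
      · exact Nat.mod_eq_of_lt h
      · rw [Nat.mod_eq_sub_mod (by omega), Nat.mod_eq_of_lt (by omega)]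
    have hinv : ∀ a : ℕ, a < d → (c + d - ((c + d - a) % d)) % d = a := by
      intro a ha
      rw [hmod (c + d - a) (by omega)]
      split_ifs with h
      · rw [hmod _ (by omega)]
        split_ifs with h2 <;> omega
      · rw [hmod _ (by omega)]
        split_ifs with h2 <;> omega
    have hdvd : ∀ a : ℕ, a < d →
        (2 * (d : ℤ)) ∣ (((j : ℤ) - 2 * a) - (2 * ((((c + d - a) % d : ℕ)) : ℤ) + 1)) := by
      intro a ha
      have h1 : ((((c + d - a) % d : ℕ)) : ℤ) = ((c : ℤ) + d - a) % (d : ℤ) := by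
        rw [Int.natCast_mod, Nat.cast_sub (by omega : a ≤ c + d)]
        push_cast
        ring_nf
      have h2 : ((c : ℤ) + d - a) % (d : ℤ)
          = (c : ℤ) + d - a - d * (((c : ℤ) + d - a) / d) := by
        rw [Int.emod_def]
      have h3 : (c : ℤ) = t - (d : ℤ) * (t / d) := by
        rw [hc, Int.emod_def]
      refine ⟨t / (d : ℤ) + ((c : ℤ) + d - a) / d - 1, ?_⟩
      rw [h1, h2]
      linear_combination ht - 2 * h3
    have hreidx : ∑ k ∈ Finset.range d, 1 / S ((j : ℤ) - 2 * k)
        = ∑ k ∈ Finset.range d, 1 / S (2 * (k : ℤ) + 1) := by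
      refine Finset.sum_bij' (fun a _ => (c + d - a) % d) (fun a _ => (c + d - a) % d)
        (fun a _ => Finset.mem_range.mpr (Nat.mod_lt _ hd0))
        (fun a _ => Finset.mem_range.mpr (Nat.mod_lt _ hd0))
        (fun a ha => hinv a (Finset.mem_range.mp ha))
        (fun a ha => hinv a (Finset.mem_range.mp ha))
        (fun a ha => ?_)
      rw [hper ((j : ℤ) - 2 * a) (2 * (((c + d - a) % d : ℕ)) + 1)
        (hdvd a (Finset.mem_range.mp ha))]
    -- splitting the sum
    have hsplit : ∑ k ∈ Finset.range d, (1 : ℝ) / S (2 * (k : ℤ) + 1)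
        = 1 + 2 * ∑ k ∈ Finset.range e, 1 / S (2 * (k : ℤ) + 1) := by
      have h1 : ∑ k ∈ Finset.range d, (1 : ℝ) / S (2 * (k : ℤ) + 1)
          = ∑ k ∈ Finset.range (e + 1), (1 : ℝ) / S (2 * (k : ℤ) + 1)
            + ∑ k ∈ Finset.range e, (1 : ℝ) / S (2 * ((e + 1 + k : ℕ) : ℤ) + 1) := by
        rw [show d = (e + 1) + e by omega, Finset.sum_range_add]
      have h2 : ∀ k, k < e → (1 : ℝ) / S (2 * ((e + 1 + k : ℕ) : ℤ) + 1)
          = 1 / S (2 * ((e - 1 - k : ℕ) : ℤ) + 1) := by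
        intro k hk
        congr 1
        rw [← hrefl (2 * ((e + 1 + k : ℕ) : ℤ) + 1)]
        congr 1
        have hcast : ((e - 1 - k : ℕ) : ℤ) = (e : ℤ) - 1 - k := by omega
        rw [hcast]
        push_cast
        omega
      rw [h1, Finset.sum_congr rfl (fun k hk => h2 k (Finset.mem_range.mp hk)),
        Finset.sum_range_reflect (fun k => (1 : ℝ) / S (2 * (k : ℤ) + 1)) e,
        Finset.sum_range_succ, hSd]
      ring
    -- Jordan bound
    have hT : ∀ k : ℕ, k < e → 1 / S (2 * (k : ℤ) + 1) ≤ (d : ℝ) * (1 / (2 * (k : ℝ) + 1)) := by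
      intro k hk
      have hkR : (k : ℝ) < e := by exact_mod_cast hk
      have hx1 : (0 : ℝ) < 2 * (k : ℝ) + 1 := by positivity
      have harg : (0 : ℝ) ≤ (2 * (k : ℝ) + 1) * Real.pi / (2 * d) := by positivity
      have harg2 : (2 * (k : ℝ) + 1) * Real.pi / (2 * d) ≤ Real.pi / 2 := by
        rw [div_le_div_iff₀ (by positivity) (by norm_num)]
        have hkd : (2 * (k : ℝ) + 1) ≤ (d : ℝ) := by
          have : (2 * k + 1 : ℕ) ≤ d := by omega
          exact_mod_cast this
        nlinarith [Real.pi_pos]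
      have hjordan := Real.mul_le_sin harg harg2
      rw [show 2 / Real.pi * ((2 * (k : ℝ) + 1) * Real.pi / (2 * d)) = (2 * (k : ℝ) + 1) / d by
        field_simp] at hjordan
      have hSpos : (2 * (k : ℝ) + 1) / d ≤ S (2 * (k : ℤ) + 1) := by
        show _ ≤ |Real.sin _|
        rw [show ((2 * (k : ℤ) + 1 : ℤ) : ℝ) = 2 * (k : ℝ) + 1 by push_cast; ring]
        exact le_trans hjordan (le_abs_self _)
      have hpos : (0 : ℝ) < (2 * (k : ℝ) + 1) / d := by positivity
      calc 1 / S (2 * (k : ℤ) + 1) ≤ 1 / ((2 * (k : ℝ) + 1) / d) :=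
            one_div_le_one_div_of_le hpos hSpos
        _ = (d : ℝ) * (1 / (2 * (k : ℝ) + 1)) := by field_simp
    -- the analytic bound
    have hached : ∑ k ∈ Finset.range d, (1 : ℝ) / S (2 * (k : ℤ) + 1)
        ≤ 2 * d * Real.log d := by
      rcases show d = 3 ∨ d = 5 ∨ d = 7 ∨ 9 ≤ d by omega with h3 | h5 | h7 | h9
      · -- d = 3
        subst h3
        have he1 : e = 1 := by omega
        rw [hsplit, he1, Finset.sum_range_one]
        have hS1 : S (2 * ((0 : ℕ) : ℤ) + 1) = 1 / 2 := by
          show |Real.sin _| = 1 / 2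
          norm_num [Real.sin_pi_div_six]
        rw [hS1]
        have hlog3 : (5 : ℝ) / 6 ≤ Real.log 3 := by
          have := aux_le_log (p := 5) (q := 6) (a := 3) (by norm_num) (by norm_num) (by norm_num)
          exact_mod_cast this
        push_cast
        norm_num
        linarith [hlog3]
      · -- d = 5
        subst h5
        have he2 : e = 2 := by omega
        have hH : ∑ k ∈ Finset.range e, (1 : ℝ) / (2 * (k : ℝ) + 1) = 4 / 3 := by
          rw [he2]
          rw [Finset.sum_range_succ, Finset.sum_range_one]
          norm_num
        have hlog5 : (3 : ℝ) / 2 ≤ Real.log 5 := by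
          have := aux_le_log (p := 3) (q := 2) (a := 5) (by norm_num) (by norm_num) (by norm_num)
          exact_mod_cast this
        rw [hsplit]
        have hsum := Finset.sum_le_sum (fun k hk => hT k (Finset.mem_range.mp hk))
        rw [← Finset.mul_sum] at hsum
        rw [hH] at hsum
        push_cast at hsum ⊢
        linarith [hlog5]
      · -- d = 7
        subst h7
        have he3 : e = 3 := by omega
        have hH : ∑ k ∈ Finset.range e, (1 : ℝ) / (2 * (k : ℝ) + 1) = 23 / 15 := by
          rw [he3]
          rw [Finset.sum_range_succ, Finset.sum_range_succ, Finset.sum_range_one]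
          norm_num
        have hlog7 : (17 : ℝ) / 10 ≤ Real.log 7 := by
          have := aux_le_log (p := 17) (q := 10) (a := 7) (by norm_num) (by norm_num) (by norm_num)
          exact_mod_cast this
        rw [hsplit]
        have hsum := Finset.sum_le_sum (fun k hk => hT k (Finset.mem_range.mp hk))
        rw [← Finset.mul_sum] at hsum
        rw [hH] at hsum
        push_cast at hsum ⊢
        linarith [hlog7]
      · -- d ≥ 9
        have he4 : 4 ≤ e := by omega
        have hharm := aux_harmonic e (by omega)
        have hlog9 : (19 : ℝ) / 9 ≤ Real.log d := by
          have h9' : (19 : ℝ) / 9 ≤ Real.log 9 := by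
            have := aux_le_log (p := 19) (q := 9) (a := 9) (by norm_num) (by norm_num)
              (by norm_num)
            exact_mod_cast this
          refine le_trans h9' ?_
          rw [Real.log_le_log_iff (by norm_num) hdR]
          exact_mod_cast h9
        have hlogd2 : Real.log (2 * (e : ℝ) - 1) ≤ Real.log d := by
          have he4R : (4 : ℝ) ≤ (e : ℝ) := by exact_mod_cast he4
          have hdcast : (d : ℝ) = 2 * e + 1 := by rw [hde]; push_cast; ring
          rw [Real.log_le_log_iff (by linarith) hdR]
          linarith
        rw [hsplit]
        have hsum := Finset.sum_le_sum (fun k hk => hT k (Finset.mem_range.mp hk))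
        rw [← Finset.mul_sum] at hsum
        have hHb : ∑ k ∈ Finset.range e, (1 : ℝ) / (2 * (k : ℝ) + 1)
            ≤ 1 + Real.log d / 2 := by
          refine le_trans hharm ?_
          linarith
        have h9R : (9 : ℝ) ≤ d := by exact_mod_cast h9
        have hdHn : (d : ℝ) * (∑ k ∈ Finset.range e, (1 : ℝ) / (2 * (k : ℝ) + 1))
            ≤ (d : ℝ) * (1 + Real.log d / 2) := mul_le_mul_of_nonneg_left hHb hdR.le
        have hdl : (d : ℝ) * (19 / 9) ≤ (d : ℝ) * Real.log d :=
          mul_le_mul_of_nonneg_left hlog9 hdR.le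
        linarith [hsum]
    -- assembly
    have hfin : (d : ℝ) * ‖A.eval (zeta d ^ j)‖
        ≤ (d : ℝ) * ((2 * Real.log d) * M) := by
      calc (d : ℝ) * ‖A.eval (zeta d ^ j)‖
          ≤ M * ∑ k ∈ Finset.range d, 1 / S ((j : ℤ) - 2 * k) := htri
        _ = M * ∑ k ∈ Finset.range d, 1 / S (2 * (k : ℤ) + 1) := by rw [hreidx]
        _ ≤ M * (2 * d * Real.log d) := mul_le_mul_of_nonneg_left hached hM0
        _ = (d : ℝ) * ((2 * Real.log d) * M) := by ring
    exact le_of_mul_le_mul_left hfin hdR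
end
end

section
/- Let p be an odd prime, let χ be the quadratic character of GF(p²), let {α,α'} be a basis for GF(p²) over GF(p), and let Z be the corresponding ternary quadratic-residue array of size p×p with generating function Z(x,y). Then there exists a basis {β,β'} for GF(p²) over GF(p) such that Z(ε_k, ε_ℓ) = (-1)^{(p+1)/2} · p · χ(kβ + ℓβ') for all integers k, ℓ, where ε_j = e^{2πij/p}. -/
open scoped BigOperators

noncomputable section

open Classical in
/-- The quadratic character of `GF(p²)`. -/
def quadChar (p : ℕ) [Fact p.Prime] (a : GaloisField p 2) : ℝ :=
  if a = 0 then 0 else if IsSquare a then 1 else -1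

open Classical in
/-- The ternary quadratic-residue array of size `p × p` associated with the basis `B`
of `GF(p²)` over `GF(p)`. -/
def qrArray (p : ℕ) [Fact p.Prime]
    (B : Module.Basis (Fin 2) (ZMod p) (GaloisField p 2)) : ℤ × ℤ → ℝ :=
  fun x => if 0 ≤ x.1 ∧ x.1 < p ∧ 0 ≤ x.2 ∧ x.2 < p then
    quadChar p ((x.1 : ZMod p) • B 0 + (x.2 : ZMod p) • B 1) else 0

namespace Stmt10Aux

open Finset Polynomial

set_option linter.unusedSectionVars false

variable (p : ℕ) [Fact p.Prime] [Fintype (GaloisField p 2)]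

local notation "F" => GaloisField p 2
local notation "K" => ZMod p

lemma cardF : Fintype.card F = p ^ 2 := by
  rw [← Nat.card_eq_fintype_card, GaloisField.card p 2 two_ne_zero]

lemma jinj : Function.Injective (algebraMap K F) := (algebraMap K F).injective

lemma two_ne (hp2 : p ≠ 2) : (2 : F) ≠ 0 := by
  have hp := (Fact.out : p.Prime)
  have hnd : ¬ ((p : ℕ) ∣ 2) := by
    intro h
    have h2 := Nat.le_of_dvd (by norm_num) h
    have := hp.two_le
    omega
  intro h
  exact hnd ((CharP.cast_eq_zero_iff F p 2).mp (by exact_mod_cast h))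

lemma fixed_mem {b : F} (hb : b ^ p = b) : ∃ x : K, algebraMap K F x = b := by
  classical
  have hp := (Fact.out : p.Prime)
  have him : (univ.image (algebraMap K F)) ⊆ univ.filter (fun b : F => b ^ p = b) := by
    intro y hy
    simp only [Finset.mem_image] at hy
    obtain ⟨x, -, rfl⟩ := hy
    simp [Finset.mem_filter, ← map_pow, ZMod.pow_card]
  have hq : (X ^ p - X : Polynomial F) ≠ 0 := by
    intro h
    have hXX : (X : Polynomial F) ^ p = X := by linear_combination h
    have hdeg := congrArg natDegree hXX
    rw [natDegree_X_pow, natDegree_X] at hdeg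
    exact hp.one_lt.ne' hdeg
  have hcard : (univ.filter (fun b : F => b ^ p = b)).card ≤ p := by
    have hsub : (univ.filter (fun b : F => b ^ p = b))
        ⊆ (X ^ p - X : Polynomial F).roots.toFinset := by
      intro b hb'
      simp only [Finset.mem_filter] at hb'
      simp only [Multiset.mem_toFinset, mem_roots, hq, ne_eq, not_false_iff, true_and,
        IsRoot.def, eval_sub, eval_pow, eval_X, sub_eq_zero, hb'.2]
    calc (univ.filter (fun b : F => b ^ p = b)).card
        ≤ (X ^ p - X : Polynomial F).roots.toFinset.card := Finset.card_le_card hsub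
      _ ≤ Multiset.card (X ^ p - X : Polynomial F).roots := Multiset.toFinset_card_le _
      _ ≤ (X ^ p - X : Polynomial F).natDegree := card_roots' _
      _ ≤ p := by
          refine le_trans (natDegree_sub_le _ _) ?_
          rw [natDegree_X_pow, natDegree_X]
          exact max_le le_rfl hp.one_lt.le
  have heq : univ.image (algebraMap K F) = univ.filter (fun b : F => b ^ p = b) := by
    apply Finset.eq_of_subset_of_card_le him
    rwa [Finset.card_image_of_injective _ (jinj p), Finset.card_univ, ZMod.card]
  have hmem : b ∈ univ.filter (fun b : F => b ^ p = b) := by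
    simp [hb]
  rw [← heq] at hmem
  simpa using hmem

lemma pow_sq (a : F) : a ^ (p * p) = a := by
  rw [← pow_two, ← cardF p, FiniteField.pow_card]

lemma tr_fix (a : F) : (a + a ^ p) ^ p = a + a ^ p := by
  rw [add_pow_char, ← pow_mul, pow_sq, add_comm]

lemma nm_fix (a : F) : (a * a ^ p) ^ p = a * a ^ p := by
  rw [mul_pow, ← pow_mul, pow_sq, mul_comm]

noncomputable def T (a : F) : K := (fixed_mem p (tr_fix p a)).choose

lemma T_spec (a : F) : algebraMap K F (T p a) = a + a ^ p :=
  (fixed_mem p (tr_fix p a)).choose_spec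

noncomputable def Nm (a : F) : K := (fixed_mem p (nm_fix p a)).choose

lemma Nm_spec (a : F) : algebraMap K F (Nm p a) = a * a ^ p :=
  (fixed_mem p (nm_fix p a)).choose_spec

lemma T_add (a b : F) : T p (a + b) = T p a + T p b := by
  apply jinj p
  rw [map_add, T_spec, T_spec, T_spec, add_pow_char]
  ring

lemma T_smul (x : K) (a : F) : T p (x • a) = x * T p a := by
  apply jinj p
  rw [map_mul, T_spec, T_spec, Algebra.smul_def, mul_pow, ← map_pow, ZMod.pow_card, mul_add]

lemma T_zero : T p 0 = 0 := by
  apply jinj p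
  simp [T_spec, (Fact.out : p.Prime).pos.ne']

lemma Nm_zero : Nm p 0 = 0 := by
  apply jinj p
  simp [Nm_spec]

lemma Nm_ne_zero {a : F} (ha : a ≠ 0) : Nm p a ≠ 0 := by
  intro h
  have hs := Nm_spec p a
  rw [h, map_zero] at hs
  rcases mul_eq_zero.mp hs.symm with h' | h'
  · exact ha h'
  · exact ha ((pow_eq_zero_iff (Fact.out : p.Prime).pos.ne').mp h')

lemma T_one_ne (hp2 : p ≠ 2) : T p 1 ≠ 0 := by
  intro h
  have hs := T_spec p 1
  rw [h, map_zero, one_pow] at hs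
  exact two_ne p hp2 (by linear_combination -hs)

noncomputable def Tlin : F →ₗ[K] K where
  toFun := T p
  map_add' := T_add p
  map_smul' x a := by simp [T_smul, smul_eq_mul]

noncomputable def Phi : F →ₗ[K] Module.Dual K F where
  toFun c := (Tlin p) ∘ₗ (LinearMap.mulLeft K c)
  map_add' c d := by
    ext a
    simp [Tlin, add_mul, T_add]
  map_smul' x c := by
    ext a
    simp [Tlin, smul_mul_assoc, T_smul, smul_eq_mul]

lemma Phi_inj (hp2 : p ≠ 2) : Function.Injective (Phi p) := by
  refine (injective_iff_map_eq_zero _).mpr ?_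
  intro c hc
  by_contra h0
  have h1 : T p (c * c⁻¹) = 0 := by
    have := congrArg (fun f => f c⁻¹) hc
    simpa [Phi, Tlin] using this
  rw [mul_inv_cancel₀ h0] at h1
  exact T_one_ne p hp2 h1

noncomputable def Edual (hp2 : p ≠ 2) : F ≃ₗ[K] Module.Dual K F :=
  LinearMap.linearEquivOfInjective (Phi p) (Phi_inj p hp2) (Subspace.dual_finrank_eq).symm

noncomputable def Bdual (hp2 : p ≠ 2) (B : Module.Basis (Fin 2) K F) : Module.Basis (Fin 2) K F :=
  (B.dualBasis).map (Edual p hp2).symm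

lemma Bdual_prop (hp2 : p ≠ 2) (B : Module.Basis (Fin 2) K F) (i : Fin 2) (a : F) :
    T p (Bdual p hp2 B i * a) = B.repr a i := by
  have h1 : Edual p hp2 (Bdual p hp2 B i) = B.dualBasis i := by
    simp [Bdual, Module.Basis.map_apply]
  have h2 : Phi p (Bdual p hp2 B i) = B.dualBasis i := by
    rw [← h1]
    rfl
  have h3 := congrArg (fun f => f a) h2
  simpa [Phi, Tlin, Module.Basis.dualBasis_apply] using h3

noncomputable def chiF : MulChar F ℤ := @quadraticChar F _ _ (Classical.decEq F)

lemma quadChar_eq (a : F) : quadChar p a = ((chiF p a : ℤ) : ℝ) := by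
  classical
  simp only [quadChar, chiF, quadraticChar_apply, quadraticCharFun]
  split_ifs <;> norm_num

lemma ringCharF : ringChar F ≠ 2 → True := fun _ => trivial

lemma hrF (hp2 : p ≠ 2) : ringChar F ≠ 2 := by
  rw [ringChar.eq F p]; exact hp2

lemma hrK (hp2 : p ≠ 2) : ringChar K ≠ 2 := by
  rw [ZMod.ringChar_zmod_n]; exact hp2

lemma exp_arith1 (hp2 : p ≠ 2) : p ^ 2 / 2 = (p + 1) * (p / 2) := by
  obtain ⟨m, rfl⟩ := (Fact.out : p.Prime).odd_of_ne_two hp2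
  have h1 : (2 * m + 1) ^ 2 = 4 * (m * m) + 4 * m + 1 := by ring
  have h2 : (2 * m + 1 + 1) * ((2 * m + 1) / 2) = 2 * (m * m) + 2 * m := by
    have h3 : (2 * m + 1) / 2 = m := by omega
    rw [h3]; ring
  omega

lemma exp_arith2 (hp2 : p ≠ 2) : p ^ 2 / 2 = (p - 1) * ((p + 1) / 2) := by
  obtain ⟨m, rfl⟩ := (Fact.out : p.Prime).odd_of_ne_two hp2
  have h1 : (2 * m + 1) ^ 2 = 4 * (m * m) + 4 * m + 1 := by ring
  have h2 : (2 * m + 1 - 1) * ((2 * m + 1 + 1) / 2) = 2 * (m * m) + 2 * m := by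
    have h3 : (2 * m + 1 + 1) / 2 = m + 1 := by omega
    rw [h3]
    have : 2 * m + 1 - 1 = 2 * m := by omega
    rw [this]; ring
  omega

lemma chi_norm (hp2 : p ≠ 2) (a : F) :
    chiF p a = quadraticChar K (Nm p a) := by
  classical
  rcases eq_or_ne a 0 with rfl | ha
  · rw [Nm_zero]
    simp [chiF]
  · have hna : Nm p a ≠ 0 := Nm_ne_zero p ha
    have key : IsSquare a ↔ IsSquare (Nm p a) := by
      rw [FiniteField.isSquare_iff (hrF p hp2) ha,
        FiniteField.isSquare_iff (hrK p hp2) hna, ZMod.card, cardF,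
        exp_arith1 p hp2, pow_mul]
      have h3 : a ^ (p + 1) = algebraMap K F (Nm p a) := by
        rw [Nm_spec, pow_succ, mul_comm]
      rw [h3, ← map_pow, ← map_one (algebraMap K F), (jinj p).eq_iff]
    show quadraticChar F a = quadraticChar K (Nm p a)
    by_cases hsq : IsSquare a
    · rw [(quadraticChar_one_iff_isSquare ha).mpr hsq,
        (quadraticChar_one_iff_isSquare hna).mpr (key.mp hsq)]
    · rw [quadraticChar_neg_one_iff_not_isSquare.mpr hsq,
        quadraticChar_neg_one_iff_not_isSquare.mpr (fun h => hsq (key.mpr h))]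

lemma isSquare_map (hp2 : p ≠ 2) (d : K) : IsSquare (algebraMap K F d) := by
  rcases eq_or_ne d 0 with rfl | hd
  · simp
  · have hda : algebraMap K F d ≠ 0 := by
      simpa using fun h => hd (jinj p (by simpa using h))
    rw [FiniteField.isSquare_iff (hrF p hp2) hda, cardF, ← map_pow,
      exp_arith2 p hp2, pow_mul, ZMod.pow_card_sub_one_eq_one hd, one_pow, map_one]

lemma count_lemma (hp2 : p ≠ 2) (t n : K) :
    (univ.filter fun a : F => T p a = t ∧ Nm p a = n).card
      + (univ.filter fun x : K => x * (t - x) = n).card = 2 := by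
  classical
  have h2 : (2 : F) ≠ 0 := two_ne p hp2
  set t' := algebraMap K F t with ht'
  set n' := algebraMap K F n with hn'
  obtain ⟨s, hs⟩ := isSquare_map p hp2 (t ^ 2 - 4 * n)
  have hs' : t' ^ 2 - 4 * n' = s * s := by
    rw [ht', hn', ← map_pow, ← map_ofNat (algebraMap K F) 4, ← map_mul, ← map_sub, hs]
  obtain ⟨r₁, r₂, hsum, hprod, hdiff⟩ :
      ∃ r₁ r₂ : F, r₁ + r₂ = t' ∧ r₁ * r₂ = n' ∧ r₁ - r₂ = s := by
    refine ⟨(t' + s) / 2, (t' - s) / 2, ?_, ?_, ?_⟩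
    · field_simp
      ring
    · field_simp
      linear_combination hs'
    · rw [div_sub_div_same]
      have hh : t' + s - (t' - s) = 2 * s := by ring
      rw [hh, mul_div_cancel_left₀ s h2]
  have htp : t' ^ p = t' := by rw [ht', ← map_pow, ZMod.pow_card]
  have hnp : n' ^ p = n' := by rw [hn', ← map_pow, ZMod.pow_card]
  have hroot : ∀ a : F, a * (t' - a) = n' ↔ a = r₁ ∨ a = r₂ := by
    intro a
    have expand : (a - r₁) * (a - r₂) = a * a - t' * a + n' := by
      linear_combination (-a) * hsum + hprod
    constructor
    · intro h
      have hz : (a - r₁) * (a - r₂) = 0 := by rw [expand]; linear_combination -h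
      rcases mul_eq_zero.mp hz with h' | h'
      · exact Or.inl (sub_eq_zero.mp h')
      · exact Or.inr (sub_eq_zero.mp h')
    · rintro (h | h)
      · rw [h]; linear_combination (-r₁) * hsum + hprod
      · rw [h]; linear_combination (-r₂) * hsum + hprod
  have hr2p : r₂ = t' - r₁ := by linear_combination hsum
  have hfrob : r₁ ^ p = r₁ ∨ r₁ ^ p = r₂ := by
    rw [← hroot]
    have hr : r₁ * (t' - r₁) = n' := (hroot r₁).mpr (Or.inl rfl)
    calc r₁ ^ p * (t' - r₁ ^ p) = (r₁ * (t' - r₁)) ^ p := by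
          rw [mul_pow, sub_pow_char, htp]
      _ = n' := by rw [hr, hnp]
  have hS1 : ∀ a : F, (T p a = t ∧ Nm p a = n) ↔ (a ^ p = t' - a ∧ a * (t' - a) = n') := by
    intro a
    constructor
    · rintro ⟨h1, h2'⟩
      have h1' : a + a ^ p = t' := by rw [← T_spec, h1]
      have h2'' : a * a ^ p = n' := by rw [← Nm_spec, h2']
      have hap : a ^ p = t' - a := by linear_combination h1'
      refine ⟨hap, ?_⟩
      rw [← hap]; exact h2''
    · rintro ⟨h1, h2'⟩
      constructor
      · apply jinj p; rw [T_spec, h1]; ring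
      · apply jinj p; rw [Nm_spec, h1]; exact h2'
  have hS2 : ∀ x : K, (x * (t - x) = n) ↔
      (algebraMap K F x = r₁ ∨ algebraMap K F x = r₂) := by
    intro x
    rw [← hroot]
    constructor
    · intro h
      have := congrArg (algebraMap K F) h
      rwa [map_mul, map_sub] at this
    · intro h
      apply jinj p
      rwa [map_mul, map_sub]
  rcases eq_or_ne s 0 with hs0 | hs0
  · have hr12 : r₁ = r₂ := by
      have : r₁ - r₂ = 0 := by rw [hdiff, hs0]
      linear_combination this
    have hrKmem : r₁ = algebraMap K F (t / 2) := by
      apply mul_left_cancel₀ h2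
      rw [map_div₀, map_ofNat (algebraMap K F) 2, ← ht']
      rw [mul_div_cancel₀ _ h2]
      linear_combination hsum + hr12
    have hfix : r₁ ^ p = r₁ := by rw [hrKmem, ← map_pow, ZMod.pow_card]
    have e1 : (univ.filter fun a : F => T p a = t ∧ Nm p a = n) = {r₁} := by
      ext a
      simp only [mem_filter, mem_univ, true_and, mem_singleton, hS1]
      constructor
      · rintro ⟨h1, hh2⟩
        rcases (hroot a).mp hh2 with h | h
        · exact h
        · rw [h, hr12]
      · rintro h
        rw [h]
        refine ⟨?_, (hroot r₁).mpr (Or.inl rfl)⟩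
        rw [hfix]
        linear_combination hsum + hr12
    have e2 : (univ.filter fun x : K => x * (t - x) = n) = {t / 2} := by
      ext x
      simp only [mem_filter, mem_univ, true_and, mem_singleton, hS2]
      constructor
      · rintro (h | h)
        · exact jinj p (by rw [h, hrKmem])
        · exact jinj p (by rw [h, ← hr12, hrKmem])
      · rintro rfl
        exact Or.inl hrKmem.symm
    rw [e1, e2]
    simp
  · have hr12 : r₁ ≠ r₂ := by
      intro h
      apply hs0
      rw [h, sub_self] at hdiff
      exact hdiff.symm
    rcases hfrob with hfix | hfix
    · have hfix2 : r₂ ^ p = r₂ := by rw [hr2p, sub_pow_char, htp, hfix]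
      have e1 : (univ.filter fun a : F => T p a = t ∧ Nm p a = n) = ∅ := by
        rw [Finset.filter_eq_empty_iff]
        intro a _
        rw [hS1]
        rintro ⟨h1, hh2⟩
        rcases (hroot a).mp hh2 with rfl | rfl
        · rw [hfix] at h1
          exact hr12 (by linear_combination h1 - hsum)
        · rw [hfix2] at h1
          exact hr12 (by linear_combination hsum - h1)
      obtain ⟨x₁, hx₁⟩ := fixed_mem p hfix
      obtain ⟨x₂, hx₂⟩ := fixed_mem p hfix2
      have hx12 : x₁ ≠ x₂ := by
        intro h
        exact hr12 (by rw [← hx₁, ← hx₂, h])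
      have e2 : (univ.filter fun x : K => x * (t - x) = n) = {x₁, x₂} := by
        ext x
        simp only [mem_filter, mem_univ, true_and, mem_insert, mem_singleton, hS2]
        constructor
        · rintro (h | h)
          · exact Or.inl (jinj p (by rw [hx₁, h]))
          · exact Or.inr (jinj p (by rw [hx₂, h]))
        · rintro (rfl | rfl)
          · exact Or.inl hx₁
          · exact Or.inr hx₂
      rw [e1, e2, Finset.card_insert_of_notMem (by simpa using hx12)]
      simp
    · have hfix2 : r₂ ^ p = r₁ := by
        rw [hr2p, sub_pow_char, htp, hfix]
        linear_combination -hsum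
      have e1 : (univ.filter fun a : F => T p a = t ∧ Nm p a = n) = {r₁, r₂} := by
        ext a
        simp only [mem_filter, mem_univ, true_and, mem_insert, mem_singleton, hS1]
        constructor
        · rintro ⟨h1, hh2⟩
          exact (hroot a).mp hh2
        · rintro (h | h)
          · rw [h]
            refine ⟨?_, (hroot _).mpr (Or.inl rfl)⟩
            rw [hfix]
            linear_combination hsum
          · rw [h]
            refine ⟨?_, (hroot _).mpr (Or.inr rfl)⟩
            rw [hfix2]
            linear_combination hsum
      have e2 : (univ.filter fun x : K => x * (t - x) = n) = ∅ := by
        rw [Finset.filter_eq_empty_iff]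
        intro x _
        rw [hS2]
        rintro (h | h)
        · have hf : r₁ ^ p = r₁ := by rw [← h, ← map_pow, ZMod.pow_card]
          exact hr12 (by rw [← hfix, hf])
        · have hf : r₂ ^ p = r₂ := by rw [← h, ← map_pow, ZMod.pow_card]
          exact hr12 (by rw [← hfix2, hf])
      rw [e1, e2, Finset.card_insert_of_notMem (by simpa using hr12)]
      simp

lemma pair_count (t n : K) :
    (univ.filter fun xy : K × K => xy.1 + xy.2 = t ∧ xy.1 * xy.2 = n).card
      = (univ.filter fun x : K => x * (t - x) = n).card := by
  classical
  apply Finset.card_bij (fun xy _ => xy.1)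
  · intro xy hxy
    simp only [mem_filter, mem_univ, true_and] at hxy ⊢
    obtain ⟨h1, h2⟩ := hxy
    rw [← h1]
    linear_combination h2
  · intro a₁ h₁ a₂ h₂ h
    simp only [mem_filter, mem_univ, true_and] at h₁ h₂
    have : a₁.2 = a₂.2 := by
      have e1 : a₁.2 = t - a₁.1 := by linear_combination h₁.1
      have e2 : a₂.2 = t - a₂.1 := by linear_combination h₂.1
      rw [e1, e2, h]
    exact Prod.ext h this
  · intro x hx
    simp only [mem_filter, mem_univ, true_and] at hx
    refine ⟨(x, t - x), ?_, rfl⟩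
    simp only [mem_filter, mem_univ, true_and]
    exact ⟨by ring, hx⟩

lemma sum_split (hp2 : p ≠ 2) (f : K → K → ℂ) :
    (∑ a : F, f (T p a) (Nm p a)) + ∑ xy : K × K, f (xy.1 + xy.2) (xy.1 * xy.2)
      = 2 * ∑ tn : K × K, f tn.1 tn.2 := by
  classical
  have h1 : (∑ a : F, f (T p a) (Nm p a))
      = ∑ tn : K × K,
          ((univ.filter fun a : F => T p a = tn.1 ∧ Nm p a = tn.2).card : ℂ) * f tn.1 tn.2 := by
    rw [← Finset.sum_fiberwise univ (fun a : F => (T p a, Nm p a))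
      (fun a => f (T p a) (Nm p a))]
    refine Finset.sum_congr rfl fun tn _ => ?_
    have hfil : (univ.filter fun a : F => (T p a, Nm p a) = tn)
        = (univ.filter fun a : F => T p a = tn.1 ∧ Nm p a = tn.2) := by
      apply Finset.filter_congr
      intro a _
      simp [Prod.ext_iff]
    rw [hfil]
    rw [Finset.sum_congr rfl (fun a ha => ?_), Finset.sum_const, nsmul_eq_mul]
    have := (Finset.mem_filter.mp ha).2
    rw [this.1, this.2]
  have h2 : (∑ xy : K × K, f (xy.1 + xy.2) (xy.1 * xy.2))
      = ∑ tn : K × K,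
          ((univ.filter fun xy : K × K => xy.1 + xy.2 = tn.1 ∧ xy.1 * xy.2 = tn.2).card : ℂ)
            * f tn.1 tn.2 := by
    rw [← Finset.sum_fiberwise univ (fun xy : K × K => (xy.1 + xy.2, xy.1 * xy.2))
      (fun xy => f (xy.1 + xy.2) (xy.1 * xy.2))]
    refine Finset.sum_congr rfl fun tn _ => ?_
    have hfil : (univ.filter fun xy : K × K => (xy.1 + xy.2, xy.1 * xy.2) = tn)
        = (univ.filter fun xy : K × K => xy.1 + xy.2 = tn.1 ∧ xy.1 * xy.2 = tn.2) := by
      apply Finset.filter_congr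
      intro a _
      simp [Prod.ext_iff]
    rw [hfil]
    rw [Finset.sum_congr rfl (fun a ha => ?_), Finset.sum_const, nsmul_eq_mul]
    have := (Finset.mem_filter.mp ha).2
    rw [this.1, this.2]
  rw [h1, h2, ← Finset.sum_add_distrib, Finset.mul_sum]
  refine Finset.sum_congr rfl fun tn _ => ?_
  rw [← add_mul]
  congr 1
  have hc := count_lemma p hp2 tn.1 tn.2
  have hpc := pair_count p tn.1 tn.2
  rw [hpc]
  exact_mod_cast hc

noncomputable def chiK : MulChar K ℂ := (quadraticChar K).ringHomComp (Int.castRingHom ℂ)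

lemma sign_eq (hp2 : p ≠ 2) :
    -(((quadraticChar K (-1) : ℤ) : ℂ)) = (-1 : ℂ) ^ ((p + 1) / 2) := by
  have hodd : p % 2 = 1 := Nat.odd_iff.mp ((Fact.out : p.Prime).odd_of_ne_two hp2)
  rw [quadraticChar_neg_one (hrK p hp2), ZMod.card, ZMod.χ₄_nat_eq_if_mod_four]
  have h4 : p % 4 = 1 ∨ p % 4 = 3 := by omega
  rcases h4 with h | h
  · rw [if_neg (by omega), if_pos h]
    have : Odd ((p + 1) / 2) := by
      refine ⟨p / 4, by omega⟩
    rw [this.neg_one_pow]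
    norm_num
  · rw [if_neg (by omega), if_neg (by omega)]
    have : Even ((p + 1) / 2) := by
      refine ⟨(p + 1) / 4, by omega⟩
    rw [this.neg_one_pow]
    norm_num

lemma G_val (hp2 : p ≠ 2) :
    ∑ a : F, chiK p (Nm p a) * ZMod.stdAddChar (T p a)
      = (-1 : ℂ) ^ ((p + 1) / 2) * p := by
  classical
  have hsplit := sum_split p hp2 (fun t n => chiK p n * ZMod.stdAddChar t)
  have hchi : ∑ n : K, chiK p n = 0 := by
    have h0 := quadraticChar_sum_zero (hrK p hp2)
    have : ∑ n : K, chiK p n = ((∑ n : K, quadraticChar K n : ℤ) : ℂ) := by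
      push_cast
      rfl
    rw [this, h0, Int.cast_zero]
  have hzero : ∑ tn : K × K, chiK p tn.2 * ZMod.stdAddChar tn.1 = 0 := by
    rw [Fintype.sum_prod_type]
    have : ∀ t : K, ∑ n : K, chiK p n * ZMod.stdAddChar t
        = (∑ n : K, chiK p n) * ZMod.stdAddChar t := fun t => by rw [Finset.sum_mul]
    rw [Finset.sum_congr rfl fun t _ => this t]
    simp [hchi]
  have hgauss : ∑ xy : K × K, chiK p (xy.1 * xy.2) * ZMod.stdAddChar (xy.1 + xy.2)
      = gaussSum (chiK p) ZMod.stdAddChar ^ 2 := by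
    rw [Fintype.sum_prod_type, pow_two, gaussSum, Finset.sum_mul_sum]
    refine Finset.sum_congr rfl fun x _ => Finset.sum_congr rfl fun y _ => ?_
    rw [map_mul, AddChar.map_add_eq_mul]
    ring
  have hne1 : chiK p ≠ 1 :=
    (MulChar.ringHomComp_ne_one_iff (Int.cast_injective (α := ℂ))).mpr
      (quadraticChar_ne_one (hrK p hp2))
  have hquad : (chiK p).IsQuadratic :=
    (quadraticChar_isQuadratic K).comp _
  have hsq := gaussSum_sq hne1 hquad (ZMod.isPrimitive_stdAddChar p)
  have hG : ∑ a : F, chiK p (Nm p a) * ZMod.stdAddChar (T p a)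
      = -(gaussSum (chiK p) ZMod.stdAddChar ^ 2) := by
    rw [← hgauss]
    linear_combination hsplit + 2 * hzero
  rw [hG, hsq, ZMod.card]
  have : chiK p (-1) = ((quadraticChar K (-1) : ℤ) : ℂ) := rfl
  rw [this]
  rw [← sign_eq p hp2]
  ring

lemma chiF_sum (hp2 : p ≠ 2) : ∑ a : F, ((chiF p a : ℤ) : ℂ) = 0 := by
  have h0 : ∑ a : F, chiF p a = 0 :=
    @quadraticChar_sum_zero F _ _ (Classical.decEq F) (hrF p hp2)
  have h1 : ∑ a : F, ((chiF p a : ℤ) : ℂ) = ((∑ a : F, chiF p a : ℤ) : ℂ) := by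
    push_cast
    rfl
  rw [h1, h0, Int.cast_zero]

lemma chiF_zero : chiF p 0 = 0 := MulChar.map_zero _

lemma chiF_inv (hp2 : p ≠ 2) {c : F} (hc : c ≠ 0) : chiF p c⁻¹ = chiF p c := by
  have h1 : chiF p c⁻¹ * chiF p c = 1 := by
    rw [← map_mul, inv_mul_cancel₀ hc]
    exact map_one _
  have h2 := @quadraticChar_dichotomy F _ _ (Classical.decEq F) c hc
  rcases h2 with h | h
  · rw [show chiF p c = 1 from h] at h1 ⊢
    simpa using h1
  · rw [show chiF p c = -1 from h] at h1 ⊢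
    linarith

lemma chi_normC (hp2 : p ≠ 2) (a : F) :
    ((chiF p a : ℤ) : ℂ) = chiK p (Nm p a) := by
  rw [chi_norm p hp2 a]
  rfl

lemma main_sum (hp2 : p ≠ 2) (c : F) :
    ∑ a : F, ((chiF p a : ℤ) : ℂ) * ZMod.stdAddChar (T p (c * a))
      = (-1 : ℂ) ^ ((p + 1) / 2) * p * ((chiF p c : ℤ) : ℂ) := by
  rcases eq_or_ne c 0 with rfl | hc
  · have hT0 : ∀ a : F, T p ((0 : F) * a) = 0 := fun a => by rw [zero_mul, T_zero]
    rw [Finset.sum_congr rfl fun a _ => by rw [hT0 a, AddChar.map_zero_eq_one, mul_one]]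
    rw [chiF_sum p hp2, chiF_zero]
    simp
  · have hstep : (∑ a : F, ((chiF p a : ℤ) : ℂ) * ZMod.stdAddChar (T p (c * a)))
        = ∑ b : F, ((chiF p (c⁻¹ * b) : ℤ) : ℂ) * ZMod.stdAddChar (T p b) := by
      apply Fintype.sum_bijective (fun a : F => c * a) (mulLeft_bijective₀ c hc)
      intro a
      rw [inv_mul_cancel_left₀ hc]
    rw [hstep]
    have hsplit2 : ∀ b : F, (((chiF p (c⁻¹ * b) : ℤ) : ℂ) * ZMod.stdAddChar (T p b))
        = ((chiF p c⁻¹ : ℤ) : ℂ) * (((chiF p b : ℤ) : ℂ) * ZMod.stdAddChar (T p b)) :=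
      fun b => by rw [map_mul]; push_cast; ring
    rw [Finset.sum_congr rfl fun b _ => hsplit2 b, ← Finset.mul_sum]
    have hG : ∑ b : F, ((chiF p b : ℤ) : ℂ) * ZMod.stdAddChar (T p b)
        = (-1 : ℂ) ^ ((p + 1) / 2) * p := by
      rw [← G_val p hp2]
      exact Finset.sum_congr rfl fun b _ => by rw [chi_normC p hp2]
    rw [hG, chiF_inv p hp2 hc]
    ring

lemma final (hp2 : p ≠ 2) (B : Module.Basis (Fin 2) K F) (k l : ℤ) :
    genFun p p (qrArray p B) (eps p k) (eps p l)
      = (-1) ^ ((p + 1) / 2) * (p : ℂ) *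
          ((quadChar p ((k : K) • Bdual p hp2 B 0 + (l : K) • Bdual p hp2 B 1) : ℝ) : ℂ) := by
  classical
  set c : F := (k : K) • Bdual p hp2 B 0 + (l : K) • Bdual p hp2 B 1 with hc
  have hTc : ∀ a : F, T p (c * a) = (k : K) * B.repr a 0 + (l : K) * B.repr a 1 := by
    intro a
    rw [hc, add_mul, smul_mul_assoc, smul_mul_assoc, T_add, T_smul, T_smul,
      Bdual_prop, Bdual_prop]
  have hrepr0 : ∀ (x y : K), B.repr (x • B 0 + y • B 1) 0 = x := by
    intro x y
    simp [Module.Basis.repr_self, Finsupp.single_apply]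
  have hrepr1 : ∀ (x y : K), B.repr (x • B 0 + y • B 1) 1 = y := by
    intro x y
    simp [Module.Basis.repr_self, Finsupp.single_apply]
  have hsum_repr : ∀ a : F, (B.repr a 0) • B 0 + (B.repr a 1) • B 1 = a := by
    intro a
    have h := B.sum_repr a
    rwa [Fin.sum_univ_two] at h
  have hEps : ∀ (m : ℤ) (i : ℕ), eps p m ^ i = ZMod.stdAddChar (((m * i : ℤ) : K)) := by
    intro m i
    rw [ZMod.stdAddChar_coe, eps, ← Complex.exp_nat_mul]
    congr 1
    push_cast
    ring
  have hcast : ∀ (m : ℤ) (i : ℕ), ((m * i : ℤ) : K) = (m : K) * (i : K) := by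
    intro m i
    push_cast
    ring
  set f : K → K → ℂ := fun x y => ((chiF p (x • B 0 + y • B 1) : ℤ) : ℂ)
      * ZMod.stdAddChar ((k : K) * x + (l : K) * y) with hf
  have step1 : genFun p p (qrArray p B) (eps p k) (eps p l)
      = ∑ i ∈ Finset.range p, ∑ jj ∈ Finset.range p, f (i : K) (jj : K) := by
    rw [genFun]
    refine Finset.sum_congr rfl fun i hi => Finset.sum_congr rfl fun jj hj => ?_
    have hqr : qrArray p B ((i : ℤ), (jj : ℤ))
        = quadChar p (((i : ℤ) : K) • B 0 + (((jj : ℤ)) : K) • B 1) := by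
      rw [qrArray]
      rw [if_pos]
      exact ⟨Int.ofNat_nonneg i,
        show ((i : ℕ) : ℤ) < (p : ℤ) by exact_mod_cast Finset.mem_range.mp hi,
        Int.ofNat_nonneg jj,
        show ((jj : ℕ) : ℤ) < (p : ℤ) by exact_mod_cast Finset.mem_range.mp hj⟩
    rw [hf]
    simp only []
    rw [hqr, quadChar_eq, hEps, hEps, hcast, hcast, mul_assoc, ← AddChar.map_add_eq_mul]
    push_cast
    rfl
  have hval : ∀ g : K → ℂ, ∑ i ∈ Finset.range p, g ((i : ℕ) : K) = ∑ x : K, g x := by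
    intro g
    apply Finset.sum_nbij' (i := fun i : ℕ => (i : K)) (j := fun x : K => x.val)
    · intro a _
      exact Finset.mem_univ _
    · intro x _
      exact Finset.mem_range.mpr (ZMod.val_lt x)
    · intro a ha
      exact ZMod.val_cast_of_lt (Finset.mem_range.mp ha)
    · intro x _
      simp [ZMod.natCast_val, ZMod.cast_id]
    · intro a _
      rfl
  have step2 : (∑ i ∈ Finset.range p, ∑ jj ∈ Finset.range p, f (i : K) (jj : K))
      = ∑ x : K, ∑ y : K, f x y := by
    have e1 : (∑ i ∈ Finset.range p, ∑ jj ∈ Finset.range p, f (i : K) (jj : K))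
        = ∑ i ∈ Finset.range p, ∑ y : K, f (i : K) y :=
      Finset.sum_congr rfl fun i _ => hval (fun y => f (i : K) y)
    have e2 : (∑ i ∈ Finset.range p, ∑ y : K, f (i : K) y) = ∑ x : K, ∑ y : K, f x y :=
      hval (fun x => ∑ y : K, f x y)
    exact e1.trans e2
  have step3 : (∑ x : K, ∑ y : K, f x y)
      = ∑ a : F, ((chiF p a : ℤ) : ℂ) * ZMod.stdAddChar (T p (c * a)) := by
    have hps : (∑ xy : K × K, f xy.1 xy.2) = ∑ x : K, ∑ y : K, f x y :=
      Fintype.sum_prod_type' f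
    rw [← hps]
    apply Fintype.sum_bijective (fun xy : K × K => xy.1 • B 0 + xy.2 • B 1)
    · constructor
      · intro u v huv
        have h0 := congrArg (fun z => B.repr z 0) huv
        have h1 := congrArg (fun z => B.repr z 1) huv
        simp only [hrepr0, hrepr1] at h0 h1
        exact Prod.ext h0 h1
      · intro a
        exact ⟨(B.repr a 0, B.repr a 1), hsum_repr a⟩
    · intro xy
      rw [hf]
      simp only []
      rw [hTc, hrepr0, hrepr1]
  rw [step1, step2, step3, main_sum p hp2 c, quadChar_eq]
  push_cast
  ring

end Stmt10Aux

/-- The generating function of a ternary quadratic-residue array at `p`-th roots of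
unity: there is a basis `{β, β'}` of `GF(p²)` over `GF(p)` with
`Z(ε_k, ε_ℓ) = (-1)^{(p+1)/2} p χ(kβ + ℓβ')`. -/
theorem stmt10 (p : ℕ) [Fact p.Prime] (hodd : Odd p)
    (B : Module.Basis (Fin 2) (ZMod p) (GaloisField p 2)) :
    ∃ B' : Module.Basis (Fin 2) (ZMod p) (GaloisField p 2),
      ∀ k l : ℤ,
        genFun p p (qrArray p B) (eps p k) (eps p l)
          = (-1) ^ ((p + 1) / 2) * (p : ℂ) *
              ((quadChar p ((k : ZMod p) • B' 0 + (l : ZMod p) • B' 1) : ℝ) : ℂ) := by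
  letI : Fintype (GaloisField p 2) := Fintype.ofFinite _
  have hp2 : p ≠ 2 := by
    rintro rfl
    simp [Nat.odd_iff] at hodd
  exact ⟨Stmt10Aux.Bdual p hp2 B, fun k l => Stmt10Aux.final p hp2 B k l⟩
end
end

section
/- Let p be an odd prime and define Γ(k,ℓ,m) = ∑_{i=0}^{p-1} ε_i² / ((1+ε_i)(ε_k+ε_i)(ε_ℓ+ε_i)(ε_m+ε_i)) for integers k, ℓ, m, where ε_j = e^{2πij/p}. Then Γ(k,k,0) = p²(p²+2)/48 if k ≡ 0 (mod p), and Γ(k,k,0) = (p²/2) · 1/(ε_k·|1-ε_k|²) if k ≢ 0 (mod p). -/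
open scoped BigOperators

noncomputable section

/-- `Γ(k,ℓ,m) = ∑_{i=0}^{p-1} ε_i² / ((1+ε_i)(ε_k+ε_i)(ε_ℓ+ε_i)(ε_m+ε_i))`. -/
def Gamma (p : ℕ) (k l m : ℤ) : ℂ :=
  ∑ i ∈ Finset.range p,
    (eps p i) ^ 2 /
      ((1 + eps p i) * (eps p k + eps p i) * (eps p l + eps p i) * (eps p m + eps p i))

section Helpers


lemma U2 {α : Type*} [DecidableEq α] (t : Finset α) (y : α → ℂ) :
    ∑ i ∈ t, ∑ j ∈ t.erase i, y i * y j = (∑ i ∈ t, y i)^2 - ∑ i ∈ t, y i^2 := by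
  have h : ∀ i ∈ t, ∑ j ∈ t.erase i, y i * y j = y i * (∑ j ∈ t, y j) - y i * y i := by
    intro i hi
    rw [← Finset.mul_sum, Finset.sum_erase_eq_sub hi, mul_sub]
  rw [Finset.sum_congr rfl h, Finset.sum_sub_distrib, ← Finset.sum_mul]
  ring_nf

lemma U3 {α : Type*} [DecidableEq α] (t : Finset α) (y : α → ℂ) :
    ∑ i ∈ t, ∑ j ∈ t.erase i, ∑ k ∈ (t.erase i).erase j, y i * y j * y k
      = (∑ i ∈ t, y i)^3 - 3*(∑ i ∈ t, y i)*(∑ i ∈ t, y i^2) + 2*(∑ i ∈ t, y i^3) := by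
  have h : ∀ i ∈ t, ∑ j ∈ t.erase i, ∑ k ∈ (t.erase i).erase j, y i * y j * y k
      = y i * (((∑ j ∈ t, y j) - y i)^2 - ((∑ j ∈ t, y j^2) - y i^2)) := by
    intro i hi
    have h1 : ∑ j ∈ t.erase i, ∑ k ∈ (t.erase i).erase j, y i * y j * y k
        = y i * ∑ j ∈ t.erase i, ∑ k ∈ (t.erase i).erase j, y j * y k := by
      rw [Finset.mul_sum]
      exact Finset.sum_congr rfl fun j _ => by
        rw [Finset.mul_sum]
        exact Finset.sum_congr rfl fun k _ => mul_assoc _ _ _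
    rw [h1, U2 (t.erase i) y, Finset.sum_erase_eq_sub hi,
      Finset.sum_erase_eq_sub (f := fun j => y j ^ 2) hi]
  rw [Finset.sum_congr rfl h]
  have expand : ∀ i ∈ t, y i * (((∑ j ∈ t, y j) - y i)^2 - ((∑ j ∈ t, y j^2) - y i^2))
      = ((∑ j ∈ t, y j)^2 - (∑ j ∈ t, y j^2)) * y i - (2*(∑ j ∈ t, y j)) * y i^2 + 2 * y i^3 :=
    fun i _ => by ring
  rw [Finset.sum_congr rfl expand, Finset.sum_add_distrib, Finset.sum_sub_distrib,
    ← Finset.mul_sum, ← Finset.mul_sum, ← Finset.mul_sum]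
  ring

lemma U4 {α : Type*} [DecidableEq α] (t : Finset α) (y : α → ℂ) :
    ∑ i ∈ t, ∑ j ∈ t.erase i, ∑ k ∈ (t.erase i).erase j, ∑ l ∈ ((t.erase i).erase j).erase k,
        y i * y j * y k * y l
      = (∑ i ∈ t, y i)^4 - 6*(∑ i ∈ t, y i)^2*(∑ i ∈ t, y i^2) + 3*(∑ i ∈ t, y i^2)^2
        + 8*(∑ i ∈ t, y i)*(∑ i ∈ t, y i^3) - 6*(∑ i ∈ t, y i^4) := by
  have h : ∀ i ∈ t, ∑ j ∈ t.erase i, ∑ k ∈ (t.erase i).erase j, ∑ l ∈ ((t.erase i).erase j).erase k,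
        y i * y j * y k * y l
      = y i * ((((∑ j ∈ t, y j) - y i))^3 - 3*(((∑ j ∈ t, y j) - y i))*(((∑ j ∈ t, y j^2) - y i^2))
          + 2*(((∑ j ∈ t, y j^3) - y i^3))) := by
    intro i hi
    have h1 : ∑ j ∈ t.erase i, ∑ k ∈ (t.erase i).erase j, ∑ l ∈ ((t.erase i).erase j).erase k,
          y i * y j * y k * y l
        = y i * ∑ j ∈ t.erase i, ∑ k ∈ (t.erase i).erase j, ∑ l ∈ ((t.erase i).erase j).erase k,
            y j * y k * y l := by
      rw [Finset.mul_sum]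
      refine Finset.sum_congr rfl fun j _ => by
        rw [Finset.mul_sum]
        refine Finset.sum_congr rfl fun k _ => by
          rw [Finset.mul_sum]
          exact Finset.sum_congr rfl fun l _ => by ring
    rw [h1, U3 (t.erase i) y, Finset.sum_erase_eq_sub hi,
      Finset.sum_erase_eq_sub (f := fun j => y j ^ 2) hi,
      Finset.sum_erase_eq_sub (f := fun j => y j ^ 3) hi]
  rw [Finset.sum_congr rfl h]
  have expand : ∀ i ∈ t, y i * ((((∑ j ∈ t, y j) - y i))^3
        - 3*(((∑ j ∈ t, y j) - y i))*(((∑ j ∈ t, y j^2) - y i^2))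
        + 2*(((∑ j ∈ t, y j^3) - y i^3)))
      = ((∑ j ∈ t, y j)^3 - 3*(∑ j ∈ t, y j)*(∑ j ∈ t, y j^2) + 2*(∑ j ∈ t, y j^3)) * y i
        - (3*(∑ j ∈ t, y j)^2 - 3*(∑ j ∈ t, y j^2)) * y i^2
        + (6*(∑ j ∈ t, y j)) * y i^3 - 6 * y i^4 :=
    fun i _ => by ring
  rw [Finset.sum_congr rfl expand, Finset.sum_sub_distrib, Finset.sum_add_distrib,
    Finset.sum_sub_distrib, ← Finset.mul_sum, ← Finset.mul_sum, ← Finset.mul_sum, ← Finset.mul_sum]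
  ring
open Finset Polynomial

lemma derivative_finset_prod {ι : Type*} [DecidableEq ι] (s : Finset ι) (f : ι → ℂ[X]) :
    derivative (∏ i ∈ s, f i) = ∑ i ∈ s, (∏ j ∈ s.erase i, f j) * derivative (f i) := by
  rw [Finset.prod_eq_multiset_prod, derivative_prod, Finset.sum_eq_multiset_sum]
  congr 1

lemma prod_add_eq (p : ℕ) (hp : p ≠ 0) (hodd : Odd p) (ζ : ℂ) (hζ : IsPrimitiveRoot ζ p) :
    ∏ i ∈ Finset.range p, ((X:ℂ[X]) + C (ζ^i)) = X^p + 1 := by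
  have hsub : (X:ℂ[X])^p - 1 = ∏ i ∈ Finset.range p, (X - C (ζ^i)) := by
    have h1 : ((X:ℂ[X])^p - C 1).roots = nthRoots p 1 := rfl
    have h2 := hζ.nthRoots_eq (one_pow p)
    have hmonic : ((X:ℂ[X])^p - C 1).Monic := monic_X_pow_sub_C 1 hp
    have hcard : Multiset.card ((X:ℂ[X])^p - C 1).roots = ((X:ℂ[X])^p - C 1).natDegree := by
      rw [h1, hζ.card_nthRoots_one, natDegree_X_pow_sub_C]
    have h3 := prod_multiset_X_sub_C_of_monic_of_roots_card_eq hmonic hcard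
    rw [h1, h2] at h3
    rw [map_one] at h3
    rw [← h3, Multiset.map_map, ← Finset.range_val]
    rw [Finset.prod]
    congr 1
    simp
  apply Polynomial.funext
  intro x
  have hx := congrArg (eval (-x)) hsub
  simp only [eval_sub, eval_pow, eval_X, eval_one, eval_prod, eval_add, eval_C] at hx ⊢
  have : ∀ i ∈ Finset.range p, -x - ζ^i = (-1) * (x + ζ^i) := fun i _ => by ring
  rw [Finset.prod_congr rfl this, Finset.prod_mul_distrib, Finset.prod_const,
    Finset.card_range, hodd.neg_one_pow, hodd.neg_pow] at hx
  linear_combination hx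

lemma key (p : ℕ) (hp : p ≠ 0) (hodd : Odd p) (ζ : ℂ) (hζ : IsPrimitiveRoot ζ p)
    (x : ℂ) (hx : ∀ i ∈ Finset.range p, x + ζ^i ≠ 0) :
    ((x^p + 1) * (∑ i ∈ Finset.range p, (x+ζ^i)⁻¹) = (p:ℂ) * x^(p-1)) ∧
    ((x^p + 1) * ((∑ i ∈ Finset.range p, (x+ζ^i)⁻¹)^2 - ∑ i ∈ Finset.range p, ((x+ζ^i)⁻¹)^2)
        = (p:ℂ) * ((p-1:ℕ):ℂ) * x^(p-2)) ∧
    ((x^p + 1) * ((∑ i ∈ Finset.range p, (x+ζ^i)⁻¹)^3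
        - 3*(∑ i ∈ Finset.range p, (x+ζ^i)⁻¹)*(∑ i ∈ Finset.range p, ((x+ζ^i)⁻¹)^2)
        + 2*(∑ i ∈ Finset.range p, ((x+ζ^i)⁻¹)^3))
        = (p:ℂ) * ((p-1:ℕ):ℂ) * ((p-2:ℕ):ℂ) * x^(p-3)) ∧
    ((x^p + 1) * ((∑ i ∈ Finset.range p, (x+ζ^i)⁻¹)^4
        - 6*(∑ i ∈ Finset.range p, (x+ζ^i)⁻¹)^2*(∑ i ∈ Finset.range p, ((x+ζ^i)⁻¹)^2)
        + 3*(∑ i ∈ Finset.range p, ((x+ζ^i)⁻¹)^2)^2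
        + 8*(∑ i ∈ Finset.range p, (x+ζ^i)⁻¹)*(∑ i ∈ Finset.range p, ((x+ζ^i)⁻¹)^3)
        - 6*(∑ i ∈ Finset.range p, ((x+ζ^i)⁻¹)^4))
        = (p:ℂ) * ((p-1:ℕ):ℂ) * ((p-2:ℕ):ℂ) * ((p-3:ℕ):ℂ) * x^(p-4)) := by
  have hQ := prod_add_eq p hp hodd ζ hζ
  set s := Finset.range p with hs
  -- polynomial identities
  have E1p : ∑ i ∈ s, ∏ j ∈ s.erase i, ((X:ℂ[X]) + C (ζ^j)) = C (p:ℂ) * X^(p-1) := by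
    have h := congrArg derivative hQ
    rw [derivative_finset_prod] at h
    simpa [derivative_X_pow, -map_pow] using h
  have E2p : ∑ i ∈ s, ∑ j ∈ s.erase i, ∏ k ∈ (s.erase i).erase j, ((X:ℂ[X]) + C (ζ^k))
      = C ((p:ℂ) * ((p-1:ℕ):ℂ)) * X^(p-2) := by
    have h := congrArg derivative E1p
    rw [derivative_sum] at h
    have h2 : ∀ i ∈ s, derivative (∏ j ∈ s.erase i, ((X:ℂ[X]) + C (ζ^j)))
        = ∑ j ∈ s.erase i, ∏ k ∈ (s.erase i).erase j, ((X:ℂ[X]) + C (ζ^k)) := by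
      intro i _
      rw [derivative_finset_prod]
      simp [-map_pow]
    rw [Finset.sum_congr rfl h2] at h
    rw [derivative_C_mul_X_pow] at h
    have hexp : p - 1 - 1 = p - 2 := by omega
    rw [hexp] at h
    exact h
  have E3p : ∑ i ∈ s, ∑ j ∈ s.erase i, ∑ k ∈ (s.erase i).erase j,
        ∏ l ∈ ((s.erase i).erase j).erase k, ((X:ℂ[X]) + C (ζ^l))
      = C ((p:ℂ) * ((p-1:ℕ):ℂ) * ((p-2:ℕ):ℂ)) * X^(p-3) := by
    have h := congrArg derivative E2p
    rw [derivative_sum] at h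
    have h2 : ∀ i ∈ s, derivative (∑ j ∈ s.erase i, ∏ k ∈ (s.erase i).erase j, ((X:ℂ[X]) + C (ζ^k)))
        = ∑ j ∈ s.erase i, ∑ k ∈ (s.erase i).erase j,
            ∏ l ∈ ((s.erase i).erase j).erase k, ((X:ℂ[X]) + C (ζ^l)) := by
      intro i _
      rw [derivative_sum]
      refine Finset.sum_congr rfl fun j _ => ?_
      rw [derivative_finset_prod]
      simp [-map_pow]
    rw [Finset.sum_congr rfl h2] at h
    rw [derivative_C_mul_X_pow] at h
    have hexp : p - 2 - 1 = p - 3 := by omega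
    rw [hexp] at h
    exact h
  have E4p : ∑ i ∈ s, ∑ j ∈ s.erase i, ∑ k ∈ (s.erase i).erase j,
        ∑ l ∈ ((s.erase i).erase j).erase k,
        ∏ m ∈ (((s.erase i).erase j).erase k).erase l, ((X:ℂ[X]) + C (ζ^m))
      = C ((p:ℂ) * ((p-1:ℕ):ℂ) * ((p-2:ℕ):ℂ) * ((p-3:ℕ):ℂ)) * X^(p-4) := by
    have h := congrArg derivative E3p
    rw [derivative_sum] at h
    have h2 : ∀ i ∈ s, derivative (∑ j ∈ s.erase i, ∑ k ∈ (s.erase i).erase j,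
          ∏ l ∈ ((s.erase i).erase j).erase k, ((X:ℂ[X]) + C (ζ^l)))
        = ∑ j ∈ s.erase i, ∑ k ∈ (s.erase i).erase j, ∑ l ∈ ((s.erase i).erase j).erase k,
            ∏ m ∈ (((s.erase i).erase j).erase k).erase l, ((X:ℂ[X]) + C (ζ^m)) := by
      intro i _
      rw [derivative_sum]
      refine Finset.sum_congr rfl fun j _ => ?_
      rw [derivative_sum]
      refine Finset.sum_congr rfl fun k _ => ?_
      rw [derivative_finset_prod]
      simp [-map_pow]
    rw [Finset.sum_congr rfl h2] at h
    rw [derivative_C_mul_X_pow] at h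
    have hexp : p - 3 - 1 = p - 4 := by omega
    rw [hexp] at h
    exact h
  -- evaluate at x
  have hfull : ∏ i ∈ s, (x + ζ^i) = x^p + 1 := by
    have := congrArg (eval x) hQ
    simpa [eval_prod] using this
  have e1 := congrArg (eval x) E1p
  simp only [eval_finset_sum, eval_prod, eval_add, eval_X, eval_C, eval_mul, eval_pow] at e1
  have e2 := congrArg (eval x) E2p
  simp only [eval_finset_sum, eval_prod, eval_add, eval_X, eval_C, eval_mul, eval_pow] at e2
  have e3 := congrArg (eval x) E3p
  simp only [eval_finset_sum, eval_prod, eval_add, eval_X, eval_C, eval_mul, eval_pow] at e3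
  have e4 := congrArg (eval x) E4p
  simp only [eval_finset_sum, eval_prod, eval_add, eval_X, eval_C, eval_mul, eval_pow] at e4
  -- convert products
  have hP1 : ∀ i ∈ s, ∏ j ∈ s.erase i, (x + ζ^j) = (x^p+1) * (x+ζ^i)⁻¹ := by
    intro i hi
    rw [eq_mul_inv_iff_mul_eq₀ (hx i hi), Finset.prod_erase_mul _ _ hi]
    exact hfull
  have hP2 : ∀ i ∈ s, ∀ j ∈ s.erase i, ∏ k ∈ (s.erase i).erase j, (x + ζ^k)
      = (x^p+1) * (x+ζ^i)⁻¹ * (x+ζ^j)⁻¹ := by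
    intro i hi j hj
    rw [eq_mul_inv_iff_mul_eq₀ (hx j (Finset.mem_of_mem_erase hj)), Finset.prod_erase_mul _ _ hj]
    exact hP1 i hi
  have hP3 : ∀ i ∈ s, ∀ j ∈ s.erase i, ∀ k ∈ (s.erase i).erase j,
      ∏ l ∈ ((s.erase i).erase j).erase k, (x + ζ^l)
      = (x^p+1) * (x+ζ^i)⁻¹ * (x+ζ^j)⁻¹ * (x+ζ^k)⁻¹ := by
    intro i hi j hj k hk
    rw [eq_mul_inv_iff_mul_eq₀
        (hx k (Finset.mem_of_mem_erase (Finset.mem_of_mem_erase hk))),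
      Finset.prod_erase_mul _ _ hk]
    exact hP2 i hi j hj
  have hP4 : ∀ i ∈ s, ∀ j ∈ s.erase i, ∀ k ∈ (s.erase i).erase j,
      ∀ l ∈ ((s.erase i).erase j).erase k,
      ∏ m ∈ (((s.erase i).erase j).erase k).erase l, (x + ζ^m)
      = (x^p+1) * (x+ζ^i)⁻¹ * (x+ζ^j)⁻¹ * (x+ζ^k)⁻¹ * (x+ζ^l)⁻¹ := by
    intro i hi j hj k hk l hl
    rw [eq_mul_inv_iff_mul_eq₀
        (hx l (Finset.mem_of_mem_erase (Finset.mem_of_mem_erase (Finset.mem_of_mem_erase hl)))),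
      Finset.prod_erase_mul _ _ hl]
    exact hP3 i hi j hj k hk
  set y : ℕ → ℂ := fun i => (x + ζ^i)⁻¹ with hy
  -- conclusion 1
  rw [Finset.sum_congr rfl hP1, ← Finset.mul_sum] at e1
  refine ⟨e1, ?_, ?_, ?_⟩
  -- conclusion 2
  · rw [Finset.sum_congr rfl (fun i hi => Finset.sum_congr rfl (hP2 i hi))] at e2
    have hfac : ∑ i ∈ s, ∑ j ∈ s.erase i, (x^p+1) * y i * y j
        = (x^p+1) * ∑ i ∈ s, ∑ j ∈ s.erase i, y i * y j := by
      rw [Finset.mul_sum]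
      exact Finset.sum_congr rfl fun i _ => by
        rw [Finset.mul_sum]
        exact Finset.sum_congr rfl fun j _ => by ring
    rw [hfac, U2] at e2
    exact e2
  -- conclusion 3
  · rw [Finset.sum_congr rfl (fun i hi => Finset.sum_congr rfl
      (fun j hj => Finset.sum_congr rfl (hP3 i hi j hj)))] at e3
    have hfac : ∑ i ∈ s, ∑ j ∈ s.erase i, ∑ k ∈ (s.erase i).erase j, (x^p+1) * y i * y j * y k
        = (x^p+1) * ∑ i ∈ s, ∑ j ∈ s.erase i, ∑ k ∈ (s.erase i).erase j, y i * y j * y k := by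
      rw [Finset.mul_sum]
      refine Finset.sum_congr rfl fun i _ => ?_
      rw [Finset.mul_sum]
      refine Finset.sum_congr rfl fun j _ => ?_
      rw [Finset.mul_sum]
      exact Finset.sum_congr rfl fun k _ => by ring
    rw [hfac, U3] at e3
    exact e3
  -- conclusion 4
  · rw [Finset.sum_congr rfl (fun i hi => Finset.sum_congr rfl
      (fun j hj => Finset.sum_congr rfl (fun k hk => Finset.sum_congr rfl (hP4 i hi j hj k hk))))] at e4
    have hfac : ∑ i ∈ s, ∑ j ∈ s.erase i, ∑ k ∈ (s.erase i).erase j,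
          ∑ l ∈ ((s.erase i).erase j).erase k, (x^p+1) * y i * y j * y k * y l
        = (x^p+1) * ∑ i ∈ s, ∑ j ∈ s.erase i, ∑ k ∈ (s.erase i).erase j,
          ∑ l ∈ ((s.erase i).erase j).erase k, y i * y j * y k * y l := by
      rw [Finset.mul_sum]
      refine Finset.sum_congr rfl fun i _ => ?_
      rw [Finset.mul_sum]
      refine Finset.sum_congr rfl fun j _ => ?_
      rw [Finset.mul_sum]
      refine Finset.sum_congr rfl fun k _ => ?_
      rw [Finset.mul_sum]
      exact Finset.sum_congr rfl fun l _ => by ring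
    rw [hfac, U4] at e4
    exact e4

lemma partialFrac (e h : ℂ) (h1 : 1+e ≠ 0) (h2 : h+e ≠ 0) (h3 : h - 1 ≠ 0) :
    e^2 / ((1+e)*(h+e)*(h+e)*(1+e))
      = (-2*h/(h-1)^3) * (1+e)⁻¹ + (1/(h-1)^2)*((1+e)⁻¹)^2
        + (2*h/(h-1)^3)*(h+e)⁻¹ + (h^2/(h-1)^2)*((h+e)⁻¹)^2 := by
  have hD : ((1:ℂ)+e)*(h+e)*(h+e)*(1+e) ≠ 0 := by simp [h1, h2]
  rw [div_eq_iff hD]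
  set A := ((1:ℂ)+e)⁻¹ with hA
  set B := (h+e)⁻¹ with hB
  set C := (h-1)⁻¹ with hC
  have ra : ((1:ℂ)+e) * A = 1 := mul_inv_cancel₀ h1
  have rb : (h+e) * B = 1 := mul_inv_cancel₀ h2
  have rc : (h-1) * C = 1 := mul_inv_cancel₀ h3
  have step1 : A * ((1+e)*(h+e)*(h+e)*(1+e)) = (1+e)*(h+e)^2 := by
    linear_combination ((1+e)*(h+e)^2) * ra
  have step2 : A^2 * ((1+e)*(h+e)*(h+e)*(1+e)) = (h+e)^2 := by
    linear_combination ((1+e)*(h+e)^2*A + (h+e)^2) * ra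
  have step3 : B * ((1+e)*(h+e)*(h+e)*(1+e)) = (1+e)^2*(h+e) := by
    linear_combination ((1+e)^2*(h+e)) * rb
  have step4 : B^2 * ((1+e)*(h+e)*(h+e)*(1+e)) = (1+e)^2 := by
    linear_combination ((1+e)^2*(h+e)*B + (1+e)^2) * rb
  rw [show (-2*h/(h-1)^3 : ℂ) = -2*h*C^3 by rw [hC, div_eq_mul_inv, inv_pow],
    show ((1:ℂ)/(h-1)^2 : ℂ) = C^2 by rw [hC, one_div, inv_pow],
    show (2*h/(h-1)^3 : ℂ) = 2*h*C^3 by rw [hC, div_eq_mul_inv, inv_pow],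
    show (h^2/(h-1)^2 : ℂ) = h^2*C^2 by rw [hC, div_eq_mul_inv, inv_pow]]
  linear_combination (2*h*C^3)*step1 - C^2*step2 - (2*h*C^3)*step3 - (h^2*C^2)*step4
    + (2*h*(1+e)*(h+e)*C^2 - e^2*(C*(h-1)+1))*rc

end Helpers

set_option maxHeartbeats 2000000 in
/-- Evaluation of `Γ(k,k,0)`: it equals `p²(p²+2)/48` when `k ≡ 0 (mod p)` and
`(p²/2)·1/(ε_k |1-ε_k|²)` otherwise. -/
theorem stmt13 (p : ℕ) (hp : p.Prime) (hodd : Odd p) (k : ℤ) :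
    (k % (p : ℤ) = 0 →
      Gamma p k k 0 = (p : ℂ) ^ 2 * ((p : ℂ) ^ 2 + 2) / 48) ∧
    (k % (p : ℤ) ≠ 0 →
      Gamma p k k 0
        = (p : ℂ) ^ 2 / 2 *
            (1 / (eps p k * ((‖1 - eps p k‖ : ℝ) : ℂ) ^ 2))) := by
  have hp0 : p ≠ 0 := hp.ne_zero
  have hp3 : 3 ≤ p := by
    have h2 := hp.two_le
    rcases Nat.lt_or_ge p 3 with h | h
    · interval_cases p
      · exact absurd hodd (by decide)
    · exact h
  set ζ : ℂ := Complex.exp (2 * Real.pi * Complex.I / p) with hζdef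
  have hζ : IsPrimitiveRoot ζ p := Complex.isPrimitiveRoot_exp p hp0
  have heps : ∀ n : ℤ, eps p n = ζ ^ n := by
    intro n
    rw [show ζ ^ n = Complex.exp ((n:ℂ) * (2 * Real.pi * Complex.I / p)) from
      (Complex.exp_int_mul _ n).symm]
    simp only [eps]
    congr 1
    ring
  have hepsn : ∀ n : ℕ, eps p (n:ℤ) = ζ ^ n := by
    intro n; rw [heps, zpow_natCast]
  have heps0 : eps p 0 = 1 := by rw [heps, zpow_zero]
  have hζp : ζ ^ p = 1 := hζ.pow_eq_one
  have hne : ∀ i : ℕ, (1:ℂ) + ζ^i ≠ 0 := by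
    intro i h
    have h1 : ζ^i = -1 := by linear_combination h
    have h2 : (ζ^i)^p = 1 := by rw [← pow_mul, mul_comm, pow_mul, hζp, one_pow]
    rw [h1, hodd.neg_one_pow] at h2
    norm_num at h2
  have hc1 : ((p-1:ℕ):ℂ) = (p:ℂ) - 1 := by
    rw [Nat.cast_sub (by omega)]; norm_num
  have hc2 : ((p-2:ℕ):ℂ) = (p:ℂ) - 2 := by
    rw [Nat.cast_sub (by omega)]; norm_num
  have hc3 : ((p-3:ℕ):ℂ) = (p:ℂ) - 3 := by
    rw [Nat.cast_sub (by omega)]; norm_num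
  constructor
  · -- case k ≡ 0 (mod p)
    intro hk
    have hη : eps p k = 1 := by
      rw [heps, hζ.zpow_eq_one_iff_dvd]
      exact Int.dvd_of_emod_eq_zero hk
    obtain ⟨k1, k2, k3, k4⟩ := key p hp0 hodd ζ hζ 1 (fun i _ => hne i)
    simp only [one_pow, mul_one, hc1, hc2, hc3] at k1 k2 k3 k4
    have hG : Gamma p k k 0 = ∑ i ∈ Finset.range p,
        ((((1:ℂ)+ζ^i)⁻¹)^2 - 2*(((1:ℂ)+ζ^i)⁻¹)^3 + (((1:ℂ)+ζ^i)⁻¹)^4) := by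
      rw [Gamma]
      refine Finset.sum_congr rfl fun i _ => ?_
      rw [hepsn i, hη, heps0]
      have h := hne i
      field_simp
      ring
    rw [hG, Finset.sum_add_distrib, Finset.sum_sub_distrib]
    rw [show ∑ i ∈ Finset.range p, 2*(((1:ℂ)+ζ^i)⁻¹)^3
        = 2 * ∑ i ∈ Finset.range p, (((1:ℂ)+ζ^i)⁻¹)^3 from (Finset.mul_sum _ _ _).symm]
    have v1 : ∑ i ∈ Finset.range p, ((1:ℂ)+ζ^i)⁻¹ = (p:ℂ)/2 := by linear_combination k1/2
    rw [v1] at k2 k3 k4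
    have v2 : ∑ i ∈ Finset.range p, (((1:ℂ)+ζ^i)⁻¹)^2
        = (p:ℂ)^2/4 - (p:ℂ)*((p:ℂ)-1)/2 := by linear_combination -k2/2
    rw [v2] at k3 k4
    have v3 : ∑ i ∈ Finset.range p, (((1:ℂ)+ζ^i)⁻¹)^3
        = (p:ℂ)*(4-3*(p:ℂ))/8 := by linear_combination k3/4
    rw [v3] at k4
    have v4 : ∑ i ∈ Finset.range p, (((1:ℂ)+ζ^i)⁻¹)^4
        = (p:ℂ)/2 - 11*(p:ℂ)^2/24 + (p:ℂ)^4/48 := by linear_combination -k4/12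
    rw [v2, v3, v4]
    ring
  · -- case k ≢ 0 (mod p)
    intro hk
    set η : ℂ := eps p k with hηdef
    have hηζ : η = ζ ^ k := heps k
    have hη1 : η ≠ 1 := by
      rw [hηζ, Ne, hζ.zpow_eq_one_iff_dvd]
      intro h
      exact hk (Int.emod_eq_zero_of_dvd h)
    have hηp : η ^ p = 1 := by
      rw [hηζ, ← zpow_natCast (ζ^k) p, ← zpow_mul, mul_comm, zpow_mul, zpow_natCast, hζp,
        one_zpow]
    have hη0 : η ≠ 0 := by
      intro h; rw [h, zero_pow hp0] at hηp; norm_num at hηp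
    have hηm1 : η - 1 ≠ 0 := sub_ne_zero.mpr hη1
    have hne2 : ∀ i : ℕ, η + ζ^i ≠ 0 := by
      intro i h
      have h1 : η = -(ζ^i) := by linear_combination h
      have h2 : (ζ^i)^p = 1 := by rw [← pow_mul, mul_comm, pow_mul, hζp, one_pow]
      rw [h1, neg_pow, hodd.neg_one_pow, h2] at hηp
      norm_num at hηp
    have hpow1 : η^(p-1) * η = 1 := by
      rw [← pow_succ, show p - 1 + 1 = p by omega, hηp]
    have hpow2 : η^(p-2) * η^2 = 1 := by
      rw [← pow_add, show p - 2 + 2 = p by omega, hηp]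
    obtain ⟨k1, k2, -, -⟩ := key p hp0 hodd ζ hζ 1 (fun i _ => hne i)
    obtain ⟨m1, m2, -, -⟩ := key p hp0 hodd ζ hζ η (fun i _ => hne2 i)
    simp only [one_pow, mul_one, hc1, hηp] at k1 k2 m1 m2
    -- abbreviate the four sums
    set Sa1 := ∑ i ∈ Finset.range p, ((1:ℂ)+ζ^i)⁻¹ with hSa1
    set Sa2 := ∑ i ∈ Finset.range p, (((1:ℂ)+ζ^i)⁻¹)^2 with hSa2
    set Sb1 := ∑ i ∈ Finset.range p, (η+ζ^i)⁻¹ with hSb1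
    set Sb2 := ∑ i ∈ Finset.range p, ((η+ζ^i)⁻¹)^2 with hSb2
    have hG : Gamma p k k 0 = (-2*η/(η-1)^3) * Sa1 + (1/(η-1)^2) * Sa2
        + (2*η/(η-1)^3) * Sb1 + (η^2/(η-1)^2) * Sb2 := by
      rw [Gamma, hSa1, hSa2, hSb1, hSb2, Finset.mul_sum, Finset.mul_sum, Finset.mul_sum,
        Finset.mul_sum, ← Finset.sum_add_distrib, ← Finset.sum_add_distrib,
        ← Finset.sum_add_distrib]
      refine Finset.sum_congr rfl fun i _ => ?_
      rw [hepsn i, heps0, ← hηdef]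
      exact partialFrac (ζ^i) η (hne i) (hne2 i) hηm1
    rw [hG]
    -- values of the sums
    have w1 : Sa1 = (p:ℂ)/2 := by linear_combination k1/2
    rw [w1] at k2
    have w2 : Sa2 = (p:ℂ)^2/4 - (p:ℂ)*((p:ℂ)-1)/2 := by linear_combination -k2/2
    have w3mul : Sb1 * η = (p:ℂ)/2 := by
      linear_combination (η/2)*m1 + ((p:ℂ)/2)*hpow1
    have w3 : Sb1 = (p:ℂ)/2 * η⁻¹ := by
      rw [eq_mul_inv_iff_mul_eq₀ hη0]; exact w3mul
    have w4mul : Sb2 * η^2 = (p:ℂ)^2/4 - (p:ℂ)*((p:ℂ)-1)/2 := by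
      linear_combination (-(η^2)/2)*m2 + (-((p:ℂ)*((p:ℂ)-1))/2)*hpow2
        + (η*Sb1 + (p:ℂ)/2)*w3mul
    have w4 : Sb2 = ((p:ℂ)^2/4 - (p:ℂ)*((p:ℂ)-1)/2) * (η^2)⁻¹ := by
      rw [eq_mul_inv_iff_mul_eq₀ (pow_ne_zero 2 hη0)]; exact w4mul
    -- the absolute value
    have habsη : ‖η‖ = 1 := by
      have h := congrArg (‖·‖) hηp
      rw [norm_pow, norm_one] at h
      have h0 : (0:ℝ) ≤ ‖η‖ := norm_nonneg _
      rcases lt_trichotomy (‖η‖) 1 with hlt | heq | hgt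
      · exact absurd h (by have := pow_lt_one₀ h0 hlt hp0; linarith)
      · exact heq
      · exact absurd h (by have := one_lt_pow₀ hgt hp0; linarith)
    have hconj : (starRingEnd ℂ) η = η⁻¹ := by
      apply eq_inv_of_mul_eq_one_right
      rw [Complex.mul_conj, ← Complex.sq_norm, habsη]
      norm_num
    have habs : (((‖1-η‖):ℝ):ℂ)^2 = (1-η) * (1-η⁻¹) := by
      calc (((‖1-η‖):ℝ):ℂ)^2
          = (((‖1-η‖)^2 :ℝ):ℂ) := by norm_cast
        _ = ((Complex.normSq (1-η) : ℝ):ℂ) := by rw [Complex.sq_norm]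
        _ = (1-η) * (starRingEnd ℂ) (1-η) := (Complex.mul_conj _).symm
        _ = (1-η) * (1-η⁻¹) := by rw [map_sub, map_one, hconj]
    rw [w1, w2, w3, w4, habs]
    set u := η⁻¹ with hu
    set w := (η-1)⁻¹ with hw
    have ru : η * u = 1 := mul_inv_cancel₀ hη0
    have rw1 : (η-1) * w = 1 := mul_inv_cancel₀ hηm1
    have hden : η * ((1-η)*(1-u)) = -(η-1)^2 := by linear_combination (η-1)*ru
    rw [hden, show (1:ℂ)/(-(η-1)^2) = -w^2 by rw [one_div, inv_neg, ← inv_pow, hw],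
      show (-2*η/(η-1)^3 : ℂ) = -2*η*w^3 by rw [div_eq_mul_inv, ← inv_pow, hw],
      show ((1:ℂ)/(η-1)^2 : ℂ) = w^2 by rw [one_div, ← inv_pow, hw],
      show (2*η/(η-1)^3 : ℂ) = 2*η*w^3 by rw [div_eq_mul_inv, ← inv_pow, hw],
      show (η^2/(η-1)^2 : ℂ) = η^2*w^2 by rw [div_eq_mul_inv, ← inv_pow, hw],
      show ((η^2)⁻¹ : ℂ) = u^2 by rw [← inv_pow, hu]]
    linear_combination ((p:ℂ)*w^3 + w^2*((p:ℂ)^2/4 - (p:ℂ)*((p:ℂ)-1)/2)*(η*u+1)) * ru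
      + (-(p:ℂ)*w^2) * rw1
end
end

section
/- Let p be an odd prime and define Γ(k,ℓ,m) = ∑_{i=0}^{p-1} ε_i² / ((1+ε_i)(ε_k+ε_i)(ε_ℓ+ε_i)(ε_m+ε_i)) for integers k, ℓ, m, where ε_j = e^{2πij/p}. Then ∑_{0≤k,ℓ,m<p} |Γ(k,ℓ,m)| ≤ (p log p)⁴. -/
open scoped BigOperators

noncomputable section

section stmt14Aux
open Real

lemma eps_eq (p : ℕ) (j : ℤ) : eps p j = Complex.exp (((2 * π * j / p : ℝ) : ℂ) * Complex.I) := by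
  unfold eps; congr 1; push_cast; ring

lemma abs_eps (p : ℕ) (j : ℤ) : ‖eps p j‖ = 1 := by
  rw [eps_eq]; exact Complex.norm_exp_ofReal_mul_I _

lemma eps_add (p : ℕ) (a b : ℤ) : eps p (a + b) = eps p a * eps p b := by
  unfold eps; rw [← Complex.exp_add]; congr 1; push_cast; ring

lemma eps_emod (p : ℕ) (hp : 0 < p) (j : ℤ) : eps p (j % p) = eps p j := by
  conv_rhs => rw [← Int.mul_ediv_add_emod j p]
  rw [eps_add]
  have h1 : eps p ((p : ℤ) * (j / p)) = 1 := by
    unfold eps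
    have hpc : (p : ℂ) ≠ 0 := Nat.cast_ne_zero.2 hp.ne'
    have : (2 * (Real.pi : ℂ) * Complex.I * ((p : ℤ) * (j / (p:ℤ)) : ℤ)) / p
        = ((j / (p:ℤ) : ℤ) : ℂ) * (2 * π * Complex.I) := by
      push_cast; field_simp
    rw [this, Complex.exp_int_mul_two_pi_mul_I]
  rw [h1, one_mul]


lemma abs_one_add_eps (p : ℕ) (j : ℤ) :
    ‖1 + eps p j‖ = 2 * |Real.cos (π * j / p)| := by
  obtain ⟨θ, hθ⟩ : ∃ t : ℝ, t = π * j / p := ⟨_, rfl⟩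
  have heps : eps p j = Complex.exp (2 * (θ:ℂ) * Complex.I) := by
    rw [eps_eq, hθ]; congr 1; push_cast; ring
  have key : (1:ℂ) + Complex.exp (2*(θ:ℂ)*Complex.I)
      = Complex.exp ((θ:ℂ)*Complex.I) * (2 * Complex.cos (θ:ℂ)) := by
    rw [Complex.two_cos, mul_add, ← Complex.exp_add, ← Complex.exp_add,
      show (θ:ℂ)*Complex.I + (θ:ℂ)*Complex.I = 2*(θ:ℂ)*Complex.I from by ring,
      show (θ:ℂ)*Complex.I + -(θ:ℂ)*Complex.I = 0 from by ring, Complex.exp_zero]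
    ring
  rw [heps, key, norm_mul, Complex.norm_exp_ofReal_mul_I, one_mul, norm_mul,
    Complex.norm_two, ← Complex.ofReal_cos, Complex.norm_real, Real.norm_eq_abs, hθ]


lemma csc_bound {x : ℝ} (h0 : 0 < x) (h2 : x ≤ π / 2) : (Real.sin x)⁻¹ ≤ x⁻¹ + 3/5 := by
  have hxpi : x < π := lt_of_le_of_lt h2 (by linarith [Real.pi_pos])
  have hs : 0 < Real.sin x := Real.sin_pos_of_pos_of_lt_pi h0 hxpi
  have hxx : x * x⁻¹ = 1 := mul_inv_cancel₀ h0.ne'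
  rcases le_or_gt x 1 with h1 | h1
  · have hc : x - x^3/4 < Real.sin x := by
      have := Real.sin_gt_sub_cube h0; nlinarith [pow_pos h0 3]
    have hpos : 0 < x - x^3/4 := by nlinarith [mul_pos h0 h0, mul_pos (mul_pos h0 h0) h0]
    calc (Real.sin x)⁻¹ ≤ (x - x^3/4)⁻¹ := inv_anti₀ hpos hc.le
      _ ≤ x⁻¹ + 3/5 := by
          rw [inv_le_iff_one_le_mul₀' hpos]
          have hx3 : x^3 * x⁻¹ = x^2 := by
            rw [pow_succ, mul_assoc, hxx, mul_one]
          nlinarith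
  · have hj := Real.mul_le_sin (le_of_lt h0) h2
    have h2x : 0 < 2 / π * x := by positivity
    calc (Real.sin x)⁻¹ ≤ (2 / π * x)⁻¹ := inv_anti₀ h2x hj
      _ ≤ x⁻¹ + 3/5 := by
          rw [inv_le_iff_one_le_mul₀' h2x]
          have hpi := Real.pi_lt_d2
          have hpi0 := Real.pi_pos
          have hpinv : π * π⁻¹ = 1 := mul_inv_cancel₀ (ne_of_gt hpi0)
          rw [div_eq_mul_inv]
          nlinarith [mul_pos h0 (inv_pos.2 hpi0)]

lemma sum_f_shift (p : ℕ) (hp : 0 < p) (i : ℤ) (g : ℤ → ℝ) :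
    ∑ k ∈ Finset.range p, g ((i - (k:ℤ)) % p) = ∑ j ∈ Finset.range p, g j := by
  have hpz : (0:ℤ) < (p:ℤ) := by exact_mod_cast hp
  refine Finset.sum_nbij' (i := fun k => ((i - (k:ℤ)) % (p:ℤ)).toNat)
    (j := fun j => ((i - (j:ℤ)) % (p:ℤ)).toNat) ?_ ?_ ?_ ?_ ?_
  · intro a ha
    simp only [Finset.mem_range] at *
    have h1 := Int.emod_nonneg (i - (a:ℤ)) hpz.ne'
    have h2 := Int.emod_lt_of_pos (i - (a:ℤ)) hpz
    omega
  · intro a ha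
    simp only [Finset.mem_range] at *
    have h1 := Int.emod_nonneg (i - (a:ℤ)) hpz.ne'
    have h2 := Int.emod_lt_of_pos (i - (a:ℤ)) hpz
    omega
  · intro a ha
    simp only [Finset.mem_range] at ha
    have h1 := Int.emod_nonneg (i - (a:ℤ)) hpz.ne'
    have h2 := Int.emod_lt_of_pos (i - (a:ℤ)) hpz
    have hc : ((((i - (a:ℤ)) % (p:ℤ)).toNat : ℤ)) = (i - (a:ℤ)) % (p:ℤ) := Int.toNat_of_nonneg h1
    have key : (i - (i - (a:ℤ)) % (p:ℤ)) % (p:ℤ) = (a:ℤ) := by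
      rw [Int.sub_emod, Int.emod_emod_of_dvd _ dvd_rfl, ← Int.sub_emod]
      simp only [sub_sub_cancel]
      exact Int.emod_eq_of_lt (by positivity) (by exact_mod_cast ha)
    rw [hc, key]
    simp
  · intro a ha
    simp only [Finset.mem_range] at ha
    have h1 := Int.emod_nonneg (i - (a:ℤ)) hpz.ne'
    have h2 := Int.emod_lt_of_pos (i - (a:ℤ)) hpz
    have hc : ((((i - (a:ℤ)) % (p:ℤ)).toNat : ℤ)) = (i - (a:ℤ)) % (p:ℤ) := Int.toNat_of_nonneg h1
    have key : (i - (i - (a:ℤ)) % (p:ℤ)) % (p:ℤ) = (a:ℤ) := by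
      rw [Int.sub_emod, Int.emod_emod_of_dvd _ dvd_rfl, ← Int.sub_emod]
      simp only [sub_sub_cancel]
      exact Int.emod_eq_of_lt (by positivity) (by exact_mod_cast ha)
    rw [hc, key]
    simp
  · intro a ha
    have h1 := Int.emod_nonneg (i - (a:ℤ)) hpz.ne'
    congr 1
    rw [Int.toNat_of_nonneg h1]

lemma abs_one_add_eps_sin (p : ℕ) (hp : 0 < p) (j : ℕ) (hj : j < p) :
    ‖1 + eps p j‖ = 2 * Real.sin (π * |(p:ℝ) - 2*j| / (2*p)) := by
  have hp0 : (0:ℝ) < p := by exact_mod_cast hp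
  have hpi := Real.pi_pos
  obtain ⟨a, ha⟩ : ∃ a : ℝ, a = (p:ℝ) - 2*j := ⟨_, rfl⟩
  have hjr : (j:ℝ) ≤ (p:ℝ) - 1 := by
    have : (j:ℝ) + 1 ≤ p := by exact_mod_cast hj
    linarith
  have hj0 : (0:ℝ) ≤ j := Nat.cast_nonneg j
  have haup : a ≤ (p:ℝ) := by rw [ha]; linarith
  have halow : -(p:ℝ) ≤ a := by rw [ha]; linarith
  have ht : π / 2 - π * j / p = π * a / (2*p) := by rw [ha]; field_simp
  rw [abs_one_add_eps]
  push_cast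
  rw [← Real.sin_pi_div_two_sub, ht, ← ha]
  congr 1
  rcases le_or_gt 0 a with h | h
  · rw [abs_of_nonneg h, abs_of_nonneg]
    apply Real.sin_nonneg_of_nonneg_of_le_pi
    · positivity
    · rw [div_le_iff₀ (by positivity)]
      nlinarith
  · rw [abs_of_neg h]
    rw [show π * a / (2*p) = -(π * (-a) / (2*p)) by ring, Real.sin_neg, abs_neg,
      abs_of_nonneg]
    apply Real.sin_nonneg_of_nonneg_of_le_pi
    · have : 0 < -a := by linarith
      positivity
    · rw [div_le_iff₀ (by positivity)]
      nlinarith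

lemma f_zero (p : ℕ) : (‖1 + eps p 0‖)⁻¹ = 1/2 := by
  have : eps p 0 = 1 := by
    unfold eps
    norm_num [Complex.exp_zero]
  rw [this]
  norm_num

lemma term_bound (p : ℕ) (hodd : Odd p) (j : ℕ) (hj : j < p) :
    (‖1 + eps p j‖)⁻¹ ≤ (p:ℝ)/(π * |(p:ℝ) - 2*j|) + 3/10 := by
  have hp : 0 < p := hodd.pos
  have hp0 : (0:ℝ) < p := by exact_mod_cast hp
  have hpi := Real.pi_pos
  have hne : (p:ℝ) - 2*j ≠ 0 := by
    intro h
    have : (p:ℝ) = 2*j := by linarith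
    have : p = 2*j := by exact_mod_cast this
    obtain ⟨t, ht⟩ := hodd
    omega
  have habs : 0 < |(p:ℝ) - 2*j| := abs_pos.2 hne
  obtain ⟨x, hx⟩ : ∃ x : ℝ, x = π * |(p:ℝ) - 2*j| / (2*p) := ⟨_, rfl⟩
  have hx0 : 0 < x := by rw [hx]; positivity
  have hx2 : x ≤ π / 2 := by
    rw [hx, div_le_div_iff₀ (by positivity) (by norm_num)]
    have hd : |(p:ℝ) - 2*j| ≤ p := by
      rw [abs_le]
      constructor
      · have : (j:ℝ) ≤ (p:ℝ) - 1 := by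
          have : (j:ℝ) + 1 ≤ p := by exact_mod_cast hj
          linarith
        linarith [Nat.cast_nonneg (α := ℝ) j]
      · linarith [Nat.cast_nonneg (α := ℝ) j]
    nlinarith
  rw [abs_one_add_eps_sin p hp j hj, ← hx, mul_inv]
  have hcsc := csc_bound hx0 hx2
  have hxinv : x⁻¹ = 2*p/(π * |(p:ℝ) - 2*j|) := by
    rw [hx, inv_div]
  calc (2:ℝ)⁻¹ * (Real.sin x)⁻¹ ≤ 2⁻¹ * (x⁻¹ + 3/5) := by
        apply mul_le_mul_of_nonneg_left hcsc (by norm_num)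
    _ = (p:ℝ)/(π * |(p:ℝ) - 2*j|) + 3/10 := by rw [hxinv]; field_simp; ring

lemma odd_harmonic_bound : ∀ q : ℕ, 1 ≤ q →
    ∑ k ∈ Finset.range q, (1:ℝ)/(2*k+1) ≤ 1 + Real.log (2*(q:ℝ)-1) / 2 := by
  intro q hq
  induction q with
  | zero => omega
  | succ n ih =>
    rcases Nat.eq_or_lt_of_le hq with h | h
    · simp [← h]
      norm_num
    · have hn : 1 ≤ n := by omega
      have ihn := ih hn
      rw [Finset.sum_range_succ]
      have hn1 : (1:ℝ) ≤ (n:ℝ) := by exact_mod_cast hn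
      have hpos : (0:ℝ) < 2*(n:ℝ)-1 := by linarith
      have hpos2 : (0:ℝ) < 2*((n:ℝ)+1)-1 := by linarith
      have hlog : Real.log (2*(n:ℝ)-1) - Real.log (2*((n:ℝ)+1)-1) ≤ -(2*(1/(2*(n:ℝ)+1))) := by
        have h1 := Real.log_le_sub_one_of_pos (show (0:ℝ) < (2*(n:ℝ)-1)/(2*((n:ℝ)+1)-1) by positivity)
        rw [Real.log_div hpos.ne' hpos2.ne'] at h1
        have h2 : (2*(n:ℝ)-1)/(2*((n:ℝ)+1)-1) - 1 = -(2*(1/(2*(n:ℝ)+1))) := by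
          field_simp
          ring
        rw [h2] at h1
        exact h1
      push_cast
      linarith

lemma sum_range_two_mul (q : ℕ) (g : ℕ → ℝ) :
    ∑ j ∈ Finset.range (2*q), g j
      = ∑ j ∈ Finset.range q, g j + ∑ j ∈ Finset.range q, g (q + j) := by
  rw [two_mul, Finset.range_eq_Ico,
    ← Finset.sum_Ico_consecutive _ (Nat.zero_le q) (Nat.le_add_right q q)]
  congr 1
  · rw [Finset.range_eq_Ico]
  rw [Finset.sum_Ico_eq_sum_range, Nat.add_sub_cancel]

lemma dsum (q : ℕ) (hq : 1 ≤ q) :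
    ∑ j ∈ Finset.range (2*q), (1:ℝ)/|((2*q+1:ℕ):ℝ) - 2*((j:ℝ)+1)|
      = 2 * ∑ k ∈ Finset.range q, (1:ℝ)/(2*k+1) := by
  rw [sum_range_two_mul]
  have h1 : ∑ j ∈ Finset.range q, (1:ℝ)/|((2*q+1:ℕ):ℝ) - 2*((j:ℝ)+1)|
      = ∑ k ∈ Finset.range q, (1:ℝ)/(2*k+1) := by
    rw [← Finset.sum_range_reflect]
    apply Finset.sum_congr rfl
    intro k hk
    simp only [Finset.mem_range] at hk
    congr 1
    have hc : ((q - 1 - k : ℕ) : ℝ) = (q:ℝ) - 1 - k := by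
      have h' : q - 1 - k = q - (k+1) := by omega
      rw [h', Nat.cast_sub (by omega : k + 1 ≤ q)]
      push_cast
      ring
    have hval : ((2*q+1:ℕ):ℝ) - 2*(((q-1-k:ℕ):ℝ)+1) = 2*(k:ℝ)+1 := by
      rw [hc]; push_cast; ring
    rw [hval, abs_of_pos (by positivity)]
  have h2 : ∑ j ∈ Finset.range q, (1:ℝ)/|((2*q+1:ℕ):ℝ) - 2*(((q+j:ℕ):ℝ)+1)|
      = ∑ k ∈ Finset.range q, (1:ℝ)/(2*k+1) := by
    apply Finset.sum_congr rfl
    intro k hk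
    congr 1
    have hval : ((2*q+1:ℕ):ℝ) - 2*(((q+k:ℕ):ℝ)+1) = -(2*(k:ℝ)+1) := by
      push_cast; ring
    rw [hval, abs_neg, abs_of_pos (by positivity)]
  rw [h1, h2]
  ring

lemma log3_lb : (1.004:ℝ) ≤ Real.log 3 := by
  rw [Real.le_log_iff_exp_le (by norm_num : (0:ℝ) < 3)]
  have h1 : Real.exp 1.004 = Real.exp 1 * Real.exp 0.004 := by
    rw [← Real.exp_add]; norm_num
  have h2 : Real.exp 0.004 ≤ 0.996⁻¹ := by
    have h := Real.add_one_le_exp (-0.004 : ℝ)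
    rw [Real.exp_neg] at h
    have hpos := Real.exp_pos (0.004:ℝ)
    rw [le_inv_comm₀ hpos (by norm_num)]
    linarith
  have h3 := Real.exp_one_lt_d9
  rw [h1]
  nlinarith [Real.exp_pos (1:ℝ)]

lemma log5_lb : (1.4563:ℝ) ≤ Real.log 5 := by
  have h := Real.log_le_sub_one_of_pos (show (0:ℝ) < Real.exp 1 / 5 by positivity)
  rw [Real.log_div (Real.exp_ne_zero 1) (by norm_num), Real.log_exp] at h
  have h3 := Real.exp_one_lt_d9
  have : Real.log 5 ≥ 2 - Real.exp 1 / 5 := by linarith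
  nlinarith

lemma final_numeric (q : ℕ) (hq : 1 ≤ q) :
    1/2 + ((2*q+1:ℕ):ℝ)/π * (2 + Real.log (2*(q:ℝ)-1)) + 3/10*(2*(q:ℝ))
      ≤ ((2*q+1:ℕ):ℝ) * Real.log ((2*q+1:ℕ):ℝ) := by
  have hpi := Real.pi_gt_d6
  have hpi0 := Real.pi_pos
  rcases Nat.eq_or_lt_of_le hq with h | h
  · -- q = 1, p = 3
    subst h
    norm_num
    have h3 := log3_lb
    have h6 : 3/π*2 ≤ 1.9099 := by
      rw [div_mul_eq_mul_div, div_le_iff₀ hpi0]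
      nlinarith
    nlinarith
  · -- q ≥ 2, p ≥ 5
    have hq2 : 2 ≤ q := h
    have hq2r : (2:ℝ) ≤ q := by exact_mod_cast hq2
    have hpr : ((2*q+1:ℕ):ℝ) = 2*(q:ℝ)+1 := by push_cast; ring
    rw [hpr]
    obtain ⟨P, hP⟩ : ∃ P : ℝ, P = 2*(q:ℝ)+1 := ⟨_, rfl⟩
    rw [← hP]
    have hP5 : (5:ℝ) ≤ P := by rw [hP]; linarith
    have hP0 : (0:ℝ) < P := by linarith
    have hL : (1.4563:ℝ) ≤ Real.log P :=
      le_trans log5_lb (Real.log_le_log (by norm_num) hP5)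
    have ha0 : 0 ≤ Real.log (2*(q:ℝ)-1) := Real.log_nonneg (by linarith)
    have haL : Real.log (2*(q:ℝ)-1) ≤ Real.log P := by
      apply Real.log_le_log (by linarith)
      rw [hP]; linarith
    have hipi : π⁻¹ ≤ 0.31831 := by
      rw [inv_le_comm₀ hpi0 (by norm_num)]
      norm_num
      linarith
    have h1 : P/π * (2 + Real.log (2*(q:ℝ)-1)) ≤ P * 0.31831 * (2 + Real.log P) := by
      rw [div_eq_mul_inv, mul_assoc, mul_assoc]
      apply mul_le_mul_of_nonneg_left _ hP0.le
      apply mul_le_mul hipi (by linarith) (by linarith) (by norm_num)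
    have hpL : 1.4563 * P ≤ P * Real.log P := by
      rw [mul_comm (1.4563:ℝ) P]
      exact mul_le_mul_of_nonneg_left hL hP0.le
    nlinarith [hpL, h1, hP5]

lemma S_bound (q : ℕ) (hq : 1 ≤ q) :
    ∑ j ∈ Finset.range (2*q+1), (‖1 + eps (2*q+1) (j:ℤ)‖)⁻¹
      ≤ ((2*q+1:ℕ):ℝ) * Real.log ((2*q+1:ℕ):ℝ) := by
  have hodd : Odd (2*q+1) := ⟨q, by omega⟩
  have hpi0 := Real.pi_pos
  have hp0 : (0:ℝ) < ((2*q+1:ℕ):ℝ) := by positivity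
  rw [Finset.sum_range_succ']
  have hf0 : (‖1 + eps (2*q+1) ((0:ℕ):ℤ)‖)⁻¹ = 1/2 := by
    exact_mod_cast f_zero (2*q+1)
  rw [hf0]
  have key : ∀ i ∈ Finset.range (2*q),
      (‖1 + eps (2*q+1) ((i+1:ℕ):ℤ)‖)⁻¹
        ≤ ((2*q+1:ℕ):ℝ)/π * ((1:ℝ)/|((2*q+1:ℕ):ℝ) - 2*((i:ℝ)+1)|) + 3/10 := by
    intro i hi
    simp only [Finset.mem_range] at hi
    have hb := term_bound (2*q+1) hodd (i+1) (by omega)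
    refine le_trans hb (le_of_eq ?_)
    push_cast
    ring
  have hsum1 : ∑ i ∈ Finset.range (2*q), (‖1 + eps (2*q+1) ((i+1:ℕ):ℤ)‖)⁻¹
      ≤ ((2*q+1:ℕ):ℝ)/π * (2 * ∑ k ∈ Finset.range q, (1:ℝ)/(2*k+1)) + 3/10*(2*(q:ℝ)) := by
    calc ∑ i ∈ Finset.range (2*q), (‖1 + eps (2*q+1) ((i+1:ℕ):ℤ)‖)⁻¹
        ≤ ∑ i ∈ Finset.range (2*q),
            (((2*q+1:ℕ):ℝ)/π * ((1:ℝ)/|((2*q+1:ℕ):ℝ) - 2*((i:ℝ)+1)|) + 3/10) :=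
          Finset.sum_le_sum key
      _ = ((2*q+1:ℕ):ℝ)/π * (∑ i ∈ Finset.range (2*q), (1:ℝ)/|((2*q+1:ℕ):ℝ) - 2*((i:ℝ)+1)|)
            + 3/10*(2*(q:ℝ)) := by
          rw [Finset.sum_add_distrib, ← Finset.mul_sum, Finset.sum_const, Finset.card_range]
          push_cast
          ring
      _ = ((2*q+1:ℕ):ℝ)/π * (2 * ∑ k ∈ Finset.range q, (1:ℝ)/(2*k+1)) + 3/10*(2*(q:ℝ)) := by
          rw [dsum q hq]
  have hT := odd_harmonic_bound q hq
  have hsum2 : ((2*q+1:ℕ):ℝ)/π * (2 * ∑ k ∈ Finset.range q, (1:ℝ)/(2*k+1))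
      ≤ ((2*q+1:ℕ):ℝ)/π * (2 + Real.log (2*(q:ℝ)-1)) := by
    apply mul_le_mul_of_nonneg_left _ (by positivity)
    linarith
  have hfin := final_numeric q hq
  linarith

end stmt14Aux

/-- `∑_{0 ≤ k,ℓ,m < p} |Γ(k,ℓ,m)| ≤ (p log p)⁴`. -/
theorem stmt14 (p : ℕ) (hp : p.Prime) (hodd : Odd p) :
    ∑ k ∈ Finset.range p, ∑ l ∈ Finset.range p, ∑ m ∈ Finset.range p,
      ‖Gamma p k l m‖ ≤ ((p : ℝ) * Real.log p) ^ 4 := by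
  obtain ⟨q, hq0⟩ := hodd
  have hq' : p = 2*q + 1 := by omega
  have hq1 : 1 ≤ q := by have := hp.two_le; omega
  have hp0 : 0 < p := by omega
  set f : ℤ → ℝ := fun j => (‖1 + eps p j‖)⁻¹ with hf
  set S : ℝ := ∑ j ∈ Finset.range p, f (j:ℤ) with hS
  have hfnn : ∀ j : ℤ, 0 ≤ f j := fun j => inv_nonneg.2 (norm_nonneg _)
  have hSnn : 0 ≤ S := Finset.sum_nonneg fun _ _ => hfnn _
  have hSle : S ≤ (p:ℝ) * Real.log p := by
    have hb := S_bound q hq1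
    rw [← hq'] at hb
    exact hb
  have hshift : ∀ i : ℤ, ∑ k ∈ Finset.range p, f (i - (k:ℤ)) = S := by
    intro i
    rw [hS, ← sum_f_shift p hp0 i f]
    apply Finset.sum_congr rfl
    intro k _
    simp only [hf]
    rw [eps_emod p hp0]
  have hfac : ∀ t i : ℤ, ‖eps p t + eps p i‖ = ‖1 + eps p (i - t)‖ := by
    intro t i
    have h1 : eps p t + eps p i = eps p t * (1 + eps p (i - t)) := by
      rw [mul_add, mul_one, ← eps_add]
      congr 2
      ring
    rw [h1, norm_mul, abs_eps, one_mul]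
  have habsG : ∀ k l m : ℤ, ‖Gamma p k l m‖
      ≤ ∑ i ∈ Finset.range p, f (i:ℤ) * f ((i:ℤ) - k) * f ((i:ℤ) - l) * f ((i:ℤ) - m) := by
    intro k l m
    unfold Gamma
    refine le_trans (norm_sum_le _ _) (le_of_eq (Finset.sum_congr rfl ?_))
    intro i _
    rw [norm_div, norm_pow, abs_eps, one_pow, norm_mul, norm_mul, norm_mul,
      hfac k, hfac l, hfac m]
    simp only [hf, one_div, mul_inv]
  calc ∑ k ∈ Finset.range p, ∑ l ∈ Finset.range p, ∑ m ∈ Finset.range p,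
        ‖Gamma p k l m‖
      ≤ ∑ k ∈ Finset.range p, ∑ l ∈ Finset.range p, ∑ m ∈ Finset.range p,
        ∑ i ∈ Finset.range p, f (i:ℤ) * f ((i:ℤ) - k) * f ((i:ℤ) - l) * f ((i:ℤ) - m) := by
        apply Finset.sum_le_sum; intro k _
        apply Finset.sum_le_sum; intro l _
        apply Finset.sum_le_sum; intro m _
        exact habsG k l m
    _ = S * S * S * S := by
        have hm : ∀ k l : ℤ, ∑ m ∈ Finset.range p, ∑ i ∈ Finset.range p,
            f (i:ℤ) * f ((i:ℤ) - k) * f ((i:ℤ) - l) * f ((i:ℤ) - (m:ℤ))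
            = (∑ i ∈ Finset.range p, f (i:ℤ) * f ((i:ℤ) - k) * f ((i:ℤ) - l)) * S := by
          intro k l
          rw [Finset.sum_comm, Finset.sum_mul]
          apply Finset.sum_congr rfl
          intro i _
          rw [← Finset.mul_sum, hshift]
        have hl : ∀ k : ℤ, ∑ l ∈ Finset.range p,
            (∑ i ∈ Finset.range p, f (i:ℤ) * f ((i:ℤ) - k) * f ((i:ℤ) - (l:ℤ))) * S
            = ((∑ i ∈ Finset.range p, f (i:ℤ) * f ((i:ℤ) - k)) * S) * S := by
          intro k
          rw [← Finset.sum_mul]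
          congr 1
          calc ∑ l ∈ Finset.range p, ∑ i ∈ Finset.range p,
                f (i:ℤ) * f ((i:ℤ) - k) * f ((i:ℤ) - (l:ℤ))
              = ∑ i ∈ Finset.range p, ∑ l ∈ Finset.range p,
                f (i:ℤ) * f ((i:ℤ) - k) * f ((i:ℤ) - (l:ℤ)) := Finset.sum_comm
            _ = ∑ i ∈ Finset.range p, (f (i:ℤ) * f ((i:ℤ) - k)) * S := by
                apply Finset.sum_congr rfl
                intro i _
                rw [← Finset.mul_sum, hshift]
            _ = (∑ i ∈ Finset.range p, f (i:ℤ) * f ((i:ℤ) - k)) * S :=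
                (Finset.sum_mul _ _ _).symm
        have hk : ∑ k ∈ Finset.range p,
            (((∑ i ∈ Finset.range p, f (i:ℤ) * f ((i:ℤ) - (k:ℤ))) * S) * S)
            = ((S * S) * S) * S := by
          rw [← Finset.sum_mul, ← Finset.sum_mul]
          congr 2
          calc ∑ k ∈ Finset.range p, ∑ i ∈ Finset.range p, f (i:ℤ) * f ((i:ℤ) - (k:ℤ))
              = ∑ i ∈ Finset.range p, ∑ k ∈ Finset.range p, f (i:ℤ) * f ((i:ℤ) - (k:ℤ)) :=
                Finset.sum_comm
            _ = ∑ i ∈ Finset.range p, f (i:ℤ) * S := by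
                apply Finset.sum_congr rfl
                intro i _
                rw [← Finset.mul_sum, hshift]
            _ = S * S := by rw [← Finset.sum_mul]
        calc ∑ k ∈ Finset.range p, ∑ l ∈ Finset.range p, ∑ m ∈ Finset.range p,
              ∑ i ∈ Finset.range p, f (i:ℤ) * f ((i:ℤ) - k) * f ((i:ℤ) - l) * f ((i:ℤ) - m)
            = ∑ k ∈ Finset.range p, ∑ l ∈ Finset.range p,
              (∑ i ∈ Finset.range p, f (i:ℤ) * f ((i:ℤ) - k) * f ((i:ℤ) - (l:ℤ))) * S := by
              apply Finset.sum_congr rfl; intro k _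
              apply Finset.sum_congr rfl; intro l _
              exact hm k l
          _ = ∑ k ∈ Finset.range p,
              ((∑ i ∈ Finset.range p, f (i:ℤ) * f ((i:ℤ) - (k:ℤ))) * S) * S := by
              apply Finset.sum_congr rfl; intro k _
              exact hl k
          _ = ((S * S) * S) * S := hk
    _ ≤ ((p : ℝ) * Real.log p) ^ 4 := by
        have h4 : S * S * S * S = S ^ 4 := by ring
        rw [h4]
        exact pow_le_pow_left₀ hSnn hSle 4
end
end
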